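/- arXiv:1705.08674 — 5 statements merged into one kernel-verified Lean document; each statement's English description precedes it below -/
import Mathlib

section
/- For every n ≥ 0 and every set X ⊆ {0,1}^n, the daisy cube Q_n(X) is a partial cube; that is, Q_n(X) is an isometric subgraph of the n-cube Q_n: for any two vertices u and v of Q_n(X), the distance between u and v in Q_n(X) equals their distance in Q_n (which is the Hamming distance, the number of coordinates in which u and v differ). -/
def Qcube (n : ℕ) : SimpleGraph (Fin n → Bool) where
  Adj u v := hammingDist u v = 1
  symm := ⟨fun u v h => by rwa [hammingDist_comm]⟩
  loopless := ⟨fun u h => by simp [hammingDist_self] at h⟩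

def daisySet {n : ℕ} (X : Set (Fin n → Bool)) : Set (Fin n → Bool) :=
  {u | ∃ x ∈ X, u ≤ x}

def inducedHom {V : Type*} (G : SimpleGraph V) (S : Set V) : G.induce S →g G :=
  ⟨Subtype.val, fun h => h⟩

lemma daisy_down {n : ℕ} {X : Set (Fin n → Bool)} {u w : Fin n → Bool}
    (hu : u ∈ daisySet X) (h : w ≤ u) : w ∈ daisySet X := by
  obtain ⟨x, hx, hux⟩ := hu
  exact ⟨x, hx, le_trans h hux⟩

lemma ham_update {n : ℕ} (u : Fin n → Bool) (i : Fin n) (b : Bool) (h : u i ≠ b) :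
    hammingDist u (Function.update u i b) = 1 := by
  unfold hammingDist
  rw [show ({j | u j ≠ Function.update u i b j} : Finset (Fin n)) = {i} from ?_]
  · simp
  · ext j
    by_cases hj : j = i <;> simp [hj, Function.update, h]

lemma ham_update_lt {n : ℕ} (u v : Fin n → Bool) (i : Fin n) (h : u i ≠ v i) :
    hammingDist (Function.update u i (v i)) v + 1 = hammingDist u v := by
  unfold hammingDist
  have : (Finset.univ.filter fun j => u j ≠ v j) =
      insert i (Finset.univ.filter fun j => Function.update u i (v i) j ≠ v j) := by
    ext j
    by_cases hj : j = i <;> simp [hj, Function.update, h]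
  rw [this, Finset.card_insert_of_notMem (by simp [Function.update])]

lemma daisy_walk {n : ℕ} (X : Set (Fin n → Bool)) :
    ∀ k (u v : Fin n → Bool) (hu : u ∈ daisySet X) (hv : v ∈ daisySet X),
    hammingDist u v = k →
    ∃ p : ((Qcube n).induce (daisySet X)).Walk ⟨u, hu⟩ ⟨v, hv⟩, p.length = k := by
  intro k
  induction k with
  | zero =>
    intro u v hu hv h
    have := hammingDist_eq_zero.mp h
    subst this
    exact ⟨.nil, rfl⟩
  | succ k ih =>
    intro u v hu hv h
    have hne : u ≠ v := by
      intro e; subst e; simp [hammingDist_self] at h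
    -- choose coordinate
    have : ∃ i, u i ≠ v i ∧ Function.update u i (v i) ∈ daisySet X := by
      by_cases hc : ∃ i, u i = true ∧ v i = false
      · obtain ⟨i, hi1, hi2⟩ := hc
        refine ⟨i, by simp [hi1, hi2], daisy_down hu ?_⟩
        intro j
        by_cases hj : j = i <;> simp [hj, Function.update, hi1, hi2]
      · have hle : u ≤ v := by
          intro j
          by_cases hj : u j = true
          · have : v j = true := by
              by_contra hvj
              exact hc ⟨j, hj, by simpa using hvj⟩
            simp [hj, this]
          · simp [Bool.not_eq_true] at hj; simp [hj]
        obtain ⟨i, hi⟩ : ∃ i, u i ≠ v i := by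
          by_contra hco
          push_neg at hco
          exact hne (funext hco)
        refine ⟨i, hi, daisy_down hv ?_⟩
        intro j
        by_cases hj : j = i <;> simp [hj, Function.update, hle j]
    obtain ⟨i, hi, hmem⟩ := this
    set u' := Function.update u i (v i) with hu'
    have hadj : ((Qcube n).induce (daisySet X)).Adj ⟨u, hu⟩ ⟨u', hmem⟩ :=
      ham_update u i (v i) hi
    have hham : hammingDist u' v = k := by
      have := ham_update_lt u v i hi
      rw [← hu'] at this
      omega
    obtain ⟨p, hp⟩ := ih u' v hmem hv hham
    exact ⟨.cons hadj p, by simp [hp]⟩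

lemma ham_le_length {n : ℕ} {a b : Fin n → Bool} (p : (Qcube n).Walk a b) :
    hammingDist a b ≤ p.length := by
  induction p with
  | nil => simp [hammingDist_self]
  | @cons a c b h p ih =>
    have : hammingDist a b ≤ hammingDist a c + hammingDist c b := hammingDist_triangle _ _ _
    have hac : hammingDist a c = 1 := h
    simp only [SimpleGraph.Walk.length_cons]
    omega

noncomputable def cubeCount {V : Type*} (G : SimpleGraph V) (k : ℕ) : ℕ :=
  Set.ncard {S : Set V | Nonempty (G.induce S ≃g Qcube k)}

noncomputable def distToSet {V : Type*} (G : SimpleGraph V) (u : V) (S : Set V) : ℕ :=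
  sInf (G.dist u '' S)

noncomputable def distCubeCount {V : Type*} (G : SimpleGraph V) (u : V) (k d : ℕ) : ℕ :=
  Set.ncard {S : Set V | Nonempty (G.induce S ≃g Qcube k) ∧ distToSet G u S = d}

noncomputable def wCount {V : Type*} (G : SimpleGraph V) (u : V) (d : ℕ) : ℕ :=
  Set.ncard {v : V | G.dist u v = d}

def interval {V : Type*} (G : SimpleGraph V) (u v : V) : Set V :=
  {w | G.dist u v = G.dist u w + G.dist w v}

theorem daisy_cube_is_partial_cube (n : ℕ) (X : Set (Fin n → Bool))
    (u v : ↥(daisySet X)) :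
    ((Qcube n).induce (daisySet X)).dist u v = (Qcube n).dist u.1 v.1 ∧
    (Qcube n).dist u.1 v.1 = hammingDist u.1 v.1 := by
  set G := (Qcube n).induce (daisySet X)
  obtain ⟨p, hp⟩ := daisy_walk X (hammingDist u.1 v.1) u.1 v.1 u.2 v.2 rfl

  -- upper bounds
  have h1 : G.dist u v ≤ hammingDist u.1 v.1 := hp ▸ SimpleGraph.dist_le p
  have h2 : (Qcube n).dist u.1 v.1 ≤ hammingDist u.1 v.1 := by
    have := SimpleGraph.dist_le (p.map (inducedHom (Qcube n) (daisySet X)))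
    simp [hp] at this; exact this
  -- lower bounds
  have hreachG : G.Reachable u v := ⟨p⟩
  have hreachQ : (Qcube n).Reachable u.1 v.1 := ⟨p.map (inducedHom (Qcube n) (daisySet X))⟩
  obtain ⟨q, hq⟩ := hreachG.exists_walk_length_eq_dist
  obtain ⟨r, hr⟩ := hreachQ.exists_walk_length_eq_dist
  have h3 : hammingDist u.1 v.1 ≤ G.dist u v := by
    have := ham_le_length (q.map (inducedHom (Qcube n) (daisySet X)))
    simp [hq] at this; exact this
  have h4 : hammingDist u.1 v.1 ≤ (Qcube n).dist u.1 v.1 := hr ▸ ham_le_length r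
  omega
end

section
/- If Q is an induced subgraph of the Cartesian product G □ H of two graphs that is isomorphic to the d-cube Q_d, then the projection p_G(Q) of Q to G induces a subgraph isomorphic to Q_k for some 0 ≤ k ≤ d, the projection p_H(Q) induces a subgraph isomorphic to Q_{d−k}, and Q equals the Cartesian product p_G(Q) □ p_H(Q) (i.e. the vertex set of Q is exactly the product of the vertex sets of its two projections). -/
set_option linter.unusedSectionVars false

namespace CubeProj

variable {ι : Type*} [Fintype ι] [DecidableEq ι]

def flip (u : ι → Bool) (i : ι) : ι → Bool := Function.update u i (!u i)

lemma flip_apply (u : ι → Bool) (i j : ι) :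
    flip u i j = if j = i then !u i else u j := by
  simp [flip, Function.update]

lemma flip_flip (u : ι → Bool) (i : ι) : flip (flip u i) i = u := by
  funext j
  by_cases h : j = i <;> simp [flip_apply, h]

lemma flip_comm (u : ι → Bool) {i j : ι} (h : i ≠ j) :
    flip (flip u i) j = flip (flip u j) i := by
  funext l
  by_cases h1 : l = i <;> by_cases h2 : l = j <;>
    simp_all [flip_apply]

lemma hd_def (u v : ι → Bool) :
    hammingDist u v = (Finset.univ.filter fun i => u i ≠ v i).card := rfl

lemma hd_flip (u : ι → Bool) (i : ι) : hammingDist u (flip u i) = 1 := by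
  rw [hd_def, Finset.card_eq_one]
  refine ⟨i, ?_⟩
  ext j
  by_cases h : j = i
  · subst h; simp [flip_apply]
  · simp [flip_apply, h]

lemma hd_update {u v : ι → Bool} {j : ι} (h : u j ≠ v j) :
    hammingDist (Function.update u j (v j)) v + 1 = hammingDist u v := by
  have hset : (Finset.univ.filter fun l => Function.update u j (v j) l ≠ v l)
      = (Finset.univ.filter fun l => u l ≠ v l).erase j := by
    ext l
    by_cases hl : l = j
    · subst hl; simp [Function.update]
    · simp [Function.update, hl]
  rw [hd_def, hd_def, hset, Finset.card_erase_of_mem (by simp [h])]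
  have hpos : 0 < (Finset.univ.filter fun l => u l ≠ v l).card :=
    Finset.card_pos.mpr ⟨j, by simp [h]⟩
  omega

lemma hd_one {u v : ι → Bool} (h : hammingDist u v = 1) :
    ∃ i, u i ≠ v i ∧ v = flip u i := by
  rw [hd_def, Finset.card_eq_one] at h
  obtain ⟨i, hi⟩ := h
  have hmem : ∀ l, (u l ≠ v l) ↔ l = i := by
    intro l
    constructor
    · intro hl
      have : l ∈ (Finset.univ.filter fun l => u l ≠ v l) := by simp [hl]
      rw [hi] at this; simpa using this
    · intro hl
      have : l ∈ (Finset.univ.filter fun m => u m ≠ v m) := by rw [hi, hl]; simp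
      simpa using this
  have hii : u i ≠ v i := (hmem i).mpr rfl
  refine ⟨i, hii, ?_⟩
  funext l
  by_cases hl : l = i
  · subst hl; rw [flip_apply, if_pos rfl]
    cases hu : u l <;> cases hv : v l <;> simp_all
  · rw [flip_apply, if_neg hl]
    by_contra hne
    exact hl ((hmem l).mp (Ne.symm hne))


variable {V W : Type*} {G : SimpleGraph V} {H : SimpleGraph W} {d : ℕ}
variable {F : (Fin d → Bool) → V × W}

def horizAt (F : (Fin d → Bool) → V × W) (u : Fin d → Bool) (i : Fin d) : Prop :=
  (F (flip u i)).2 = (F u).2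

lemma adj_flip (hadj : ∀ u v, hammingDist u v = 1 ↔ (G.boxProd H).Adj (F u) (F v))
    (u : Fin d → Bool) (i : Fin d) : (G.boxProd H).Adj (F u) (F (flip u i)) :=
  (hadj u (flip u i)).1 (hd_flip u i)

lemma horiz_adj (hadj : ∀ u v, hammingDist u v = 1 ↔ (G.boxProd H).Adj (F u) (F v))
    {u : Fin d → Bool} {i : Fin d} (h : horizAt F u i) :
    G.Adj (F u).1 (F (flip u i)).1 := by
  rcases SimpleGraph.boxProd_adj.1 (adj_flip hadj u i) with ⟨hg, _⟩ | ⟨hh, _⟩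
  · exact hg
  · rw [h] at hh; exact absurd hh (H.irrefl)

lemma vert_fst (hadj : ∀ u v, hammingDist u v = 1 ↔ (G.boxProd H).Adj (F u) (F v))
    {u : Fin d → Bool} {i : Fin d} (h : ¬ horizAt F u i) :
    (F (flip u i)).1 = (F u).1 := by
  rcases SimpleGraph.boxProd_adj.1 (adj_flip hadj u i) with ⟨_, he⟩ | ⟨_, he⟩
  · exact absurd he.symm h
  · exact he.symm

lemma vert_adj (hadj : ∀ u v, hammingDist u v = 1 ↔ (G.boxProd H).Adj (F u) (F v))
    {u : Fin d → Bool} {i : Fin d} (h : ¬ horizAt F u i) :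
    H.Adj (F u).2 (F (flip u i)).2 := by
  rcases SimpleGraph.boxProd_adj.1 (adj_flip hadj u i) with ⟨_, he⟩ | ⟨hh, _⟩
  · exact absurd he.symm h
  · exact hh

lemma square (hinj : Function.Injective F)
    (hadj : ∀ u v, hammingDist u v = 1 ↔ (G.boxProd H).Adj (F u) (F v))
    {i j : Fin d} (hij : i ≠ j) {u : Fin d → Bool} (h : horizAt F u i) :
    horizAt F (flip u j) i := by
  by_contra hw
  have hzw1 : (F (flip (flip u j) i)).1 = (F (flip u j)).1 := vert_fst hadj hw
  have hxy : G.Adj (F u).1 (F (flip u i)).1 := horiz_adj hadj h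
  have hyw : (G.boxProd H).Adj (F (flip u i)) (F (flip (flip u j) i)) := by
    have h2 := adj_flip hadj (flip u i) j
    rwa [flip_comm u hij] at h2
  rcases SimpleGraph.boxProd_adj.1 (adj_flip hadj u j) with ⟨hgz, hez⟩ | ⟨hhz, hez⟩
  · -- x~z horizontal: hgz : G.Adj x.1 z.1, hez : x.2 = z.2
    rcases SimpleGraph.boxProd_adj.1 hyw with ⟨_, he⟩ | ⟨_, he⟩
    · -- he : y.2 = w.2
      refine hw ?_
      show (F (flip (flip u j) i)).2 = (F (flip u j)).2
      rw [← he, h, hez]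
    · -- he : y.1 = w.1
      have hyz : F (flip u i) = F (flip u j) := by
        apply Prod.ext
        · rw [he, hzw1]
        · rw [h, hez]
      have h3 := congrFun (hinj hyz) i
      rw [flip_apply, if_pos rfl, flip_apply, if_neg hij] at h3
      cases u i <;> simp at h3
  · -- x~z vertical: hhz : H.Adj x.2 z.2, hez : x.1 = z.1
    rcases SimpleGraph.boxProd_adj.1 hyw with ⟨_, he⟩ | ⟨_, he⟩
    · -- he : y.2 = w.2 ⇒ w = x
      have hwx : F (flip (flip u j) i) = F u := by
        apply Prod.ext
        · rw [hzw1, ← hez]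
        · rw [← he, h]
      have h3 := congrFun (hinj hwx) i
      rw [flip_apply, if_pos rfl, flip_apply, if_neg hij] at h3
      cases u i <;> simp at h3
    · -- he : y.1 = w.1 ⇒ x.1 = y.1 contradict hxy
      exact absurd ((he.trans hzw1).trans hez.symm).symm hxy.ne

lemma horiz_iff_flip (hinj : Function.Injective F)
    (hadj : ∀ u v, hammingDist u v = 1 ↔ (G.boxProd H).Adj (F u) (F v))
    (u : Fin d → Bool) (i j : Fin d) :
    horizAt F u i ↔ horizAt F (flip u j) i := by
  rcases eq_or_ne i j with rfl | hij
  · unfold horizAt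
    rw [flip_flip]
    exact eq_comm
  · constructor
    · exact square hinj hadj hij
    · intro h2
      have h3 := square hinj hadj hij (u := flip u j) h2
      rwa [flip_flip] at h3

lemma horiz_const (hinj : Function.Injective F)
    (hadj : ∀ u v, hammingDist u v = 1 ↔ (G.boxProd H).Adj (F u) (F v)) :
    ∀ (n : ℕ) (u v : Fin d → Bool), hammingDist u v = n → ∀ i,
      (horizAt F u i ↔ horizAt F v i) := by
  intro n
  induction n with
  | zero =>
    intro u v h i
    rw [hammingDist_eq_zero] at h
    rw [h]
  | succ n ih =>
    intro u v h i
    have hne : u ≠ v := by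
      intro e; rw [e, hammingDist_self] at h; exact Nat.succ_ne_zero n h.symm
    obtain ⟨j, hj⟩ := Function.ne_iff.mp hne
    have hupd : Function.update u j (v j) = flip u j := by
      unfold flip
      cases hu : u j <;> cases hv : v j <;> simp_all
    have h2 : hammingDist (flip u j) v = n := by
      have h3 := hd_update hj
      rw [hupd, h] at h3
      omega
    rw [horiz_iff_flip hinj hadj u i j]
    exact ih (flip u j) v h2 i

lemma fst_eq (hinj : Function.Injective F)
    (hadj : ∀ u v, hammingDist u v = 1 ↔ (G.boxProd H).Adj (F u) (F v)) :
    ∀ (n : ℕ) (u v : Fin d → Bool), hammingDist u v = n →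
      (∀ i, horizAt F (fun _ => false) i → u i = v i) → (F u).1 = (F v).1 := by
  intro n
  induction n with
  | zero =>
    intro u v h _
    rw [hammingDist_eq_zero] at h
    rw [h]
  | succ n ih =>
    intro u v h hag
    have hne : u ≠ v := by
      intro e; rw [e, hammingDist_self] at h; exact Nat.succ_ne_zero n h.symm
    obtain ⟨j, hj⟩ := Function.ne_iff.mp hne
    have hnh : ¬ horizAt F (fun _ => false) j := fun hh => hj (hag j hh)
    have hnu : ¬ horizAt F u j := fun hh =>
      hnh ((horiz_const hinj hadj (hammingDist u (fun _ => false)) u (fun _ => false) rfl j).mp hh)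
    have hupd : Function.update u j (v j) = flip u j := by
      unfold flip
      cases hu : u j <;> cases hv : v j <;> simp_all
    have h2 : hammingDist (flip u j) v = n := by
      have h3 := hd_update hj
      rw [hupd, h] at h3
      omega
    have step : (F (flip u j)).1 = (F u).1 := vert_fst hadj hnu
    have hag' : ∀ i, horizAt F (fun _ => false) i → flip u j i = v i := by
      intro i hi
      have hij : i ≠ j := fun e => hnh (e ▸ hi)
      rw [flip_apply, if_neg hij]
      exact hag i hi
    rw [← step]
    exact ih (flip u j) v h2 hag'

lemma snd_eq (hinj : Function.Injective F)
    (hadj : ∀ u v, hammingDist u v = 1 ↔ (G.boxProd H).Adj (F u) (F v)) :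
    ∀ (n : ℕ) (u v : Fin d → Bool), hammingDist u v = n →
      (∀ i, ¬ horizAt F (fun _ => false) i → u i = v i) → (F u).2 = (F v).2 := by
  intro n
  induction n with
  | zero =>
    intro u v h _
    rw [hammingDist_eq_zero] at h
    rw [h]
  | succ n ih =>
    intro u v h hag
    have hne : u ≠ v := by
      intro e; rw [e, hammingDist_self] at h; exact Nat.succ_ne_zero n h.symm
    obtain ⟨j, hj⟩ := Function.ne_iff.mp hne
    have hnh : horizAt F (fun _ => false) j := by
      by_contra hh
      exact hj (hag j hh)
    have hnu : horizAt F u j :=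
      (horiz_const hinj hadj (hammingDist u (fun _ => false)) u (fun _ => false) rfl j).mpr hnh
    have hupd : Function.update u j (v j) = flip u j := by
      unfold flip
      cases hu : u j <;> cases hv : v j <;> simp_all
    have h2 : hammingDist (flip u j) v = n := by
      have h3 := hd_update hj
      rw [hupd, h] at h3
      omega
    have step : (F (flip u j)).2 = (F u).2 := hnu
    have hag' : ∀ i, ¬ horizAt F (fun _ => false) i → flip u j i = v i := by
      intro i hi
      have hij : i ≠ j := fun e => hi (e ▸ hnh)
      rw [flip_apply, if_neg hij]
      exact hag i hi
    rw [← step]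
    exact ih (flip u j) v h2 hag'


lemma build {U : Type*} (K : SimpleGraph U) (π : V × W → U) (B : Finset (Fin d))
    (c1 : ∀ u v : Fin d → Bool, (∀ i ∈ B, u i = v i) → π (F u) = π (F v))
    (c2 : ∀ (u : Fin d → Bool) (i : Fin d), i ∈ B → K.Adj (π (F u)) (π (F (flip u i))))
    (c3 : ∀ u v : Fin d → Bool, (∀ i ∉ B, u i = v i) → K.Adj (π (F u)) (π (F v)) →
      hammingDist u v = 1)
    (c4 : ∀ u v : Fin d → Bool, (∀ i ∉ B, u i = v i) → π (F u) = π (F v) → u = v) :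
    Nonempty (K.induce (π '' Set.range F) ≃g Qcube B.card) := by
  classical
  set e := B.equivFin with he
  set emb : (Fin B.card → Bool) → (Fin d → Bool) :=
    fun a i => if h : i ∈ B then a (e ⟨i, h⟩) else false with hembdef
  have f1 : ∀ (a : Fin B.card → Bool) i (h : i ∈ B), emb a i = a (e ⟨i, h⟩) :=
    fun a i h => dif_pos h
  have f2 : ∀ (a : Fin B.card → Bool) i, i ∉ B → emb a i = false := fun a i h => dif_neg h
  have f3 : ∀ (a : Fin B.card → Bool) (m : Fin B.card), emb a ((e.symm m : {x // x ∈ B}) : Fin d) = a m := by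
    intro a m
    rw [f1 a _ (e.symm m).2]
    congr 1
    rw [Subtype.coe_eta, Equiv.apply_symm_apply]
  have hagree : ∀ a b : Fin B.card → Bool, ∀ i, i ∉ B → emb a i = emb b i := by
    intro a b i h; rw [f2 a i h, f2 b i h]
  have hd_emb : ∀ a b : Fin B.card → Bool, hammingDist (emb a) (emb b) = hammingDist a b := by
    intro a b
    rw [hd_def, hd_def]
    refine Finset.card_bij' (fun x hx => e ⟨x, ?_⟩) (fun m _ => ((e.symm m : {x // x ∈ B}) : Fin d)) ?_ ?_ ?_ ?_
    · by_contra hB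
      rw [Finset.mem_filter] at hx
      exact hx.2 (hagree a b x hB)
    · intro x hx
      rw [Finset.mem_filter] at hx ⊢
      refine ⟨Finset.mem_univ _, ?_⟩
      have hxB : x ∈ B := by
        by_contra hB
        exact hx.2 (hagree a b x hB)
      intro hc
      apply hx.2
      rw [f1 a x hxB, f1 b x hxB]
      exact hc
    · intro m hm
      rw [Finset.mem_filter] at hm ⊢
      refine ⟨Finset.mem_univ _, ?_⟩
      intro hc
      apply hm.2
      rw [← f3 a m, ← f3 b m]
      exact hc
    · intro x hx
      congr 1
      rw [Equiv.symm_apply_apply]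
    · intro m hm
      rw [Subtype.coe_eta, Equiv.apply_symm_apply]
  have hrangemem : ∀ a : Fin B.card → Bool, π (F (emb a)) ∈ π '' Set.range F :=
    fun a => ⟨F (emb a), ⟨emb a, rfl⟩, rfl⟩
  set β : (Fin B.card → Bool) → (π '' Set.range F : Set U) :=
    fun a => ⟨π (F (emb a)), hrangemem a⟩ with hβ
  have binj : Function.Injective β := by
    intro a b hab
    have h1 : π (F (emb a)) = π (F (emb b)) := congrArg Subtype.val hab
    have h2 := c4 _ _ (hagree a b) h1
    funext m
    have h3 := congrFun h2 ((e.symm m : {x // x ∈ B}) : Fin d)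
    rwa [f3, f3] at h3
  have bsurj : Function.Surjective β := by
    rintro ⟨x, ⟨p, ⟨u, rfl⟩, rfl⟩⟩
    refine ⟨fun m => u ((e.symm m : {x // x ∈ B}) : Fin d), Subtype.ext ?_⟩
    apply c1
    intro i hi
    rw [f1 (fun m => u ((e.symm m : {x // x ∈ B}) : Fin d)) i hi]
    show u ((e.symm (e ⟨i, hi⟩) : {x // x ∈ B}) : Fin d) = u i
    rw [Equiv.symm_apply_apply]
  have hadj2 : ∀ a b : Fin B.card → Bool,
      (K.Adj (π (F (emb a))) (π (F (emb b))) ↔ hammingDist a b = 1) := by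
    intro a b
    constructor
    · intro h
      rw [← hd_emb]
      exact c3 _ _ (hagree a b) h
    · intro h
      rw [← hd_emb] at h
      obtain ⟨i, hne, hflip⟩ := hd_one h
      have hiB : i ∈ B := by
        by_contra hB
        exact hne (hagree a b i hB)
      rw [hflip]
      exact c2 _ i hiB
  refine ⟨SimpleGraph.Iso.symm ⟨Equiv.ofBijective β ⟨binj, bsurj⟩, ?_⟩⟩
  intro a b
  exact hadj2 a b


end CubeProj

open CubeProj

theorem induced_cube_in_boxProd_is_product_of_projections {V W : Type*}
    (G : SimpleGraph V) (H : SimpleGraph W) (d : ℕ) (S : Set (V × W))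
    (hS : Nonempty ((G.boxProd H).induce S ≃g Qcube d)) :
    ∃ k ≤ d, Nonempty (G.induce (Prod.fst '' S) ≃g Qcube k) ∧
      Nonempty (H.induce (Prod.snd '' S) ≃g Qcube (d - k)) ∧
      S = (Prod.fst '' S) ×ˢ (Prod.snd '' S) := by
  classical
  obtain ⟨e0⟩ := hS
  let e := e0.symm
  set F : (Fin d → Bool) → V × W := fun u => ((e u : S) : V × W) with hF
  have hinj : Function.Injective F := fun u v h =>
    e.toEquiv.injective (Subtype.ext h)
  have hadj : ∀ u v, hammingDist u v = 1 ↔ (G.boxProd H).Adj (F u) (F v) := by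
    intro u v
    exact Iff.symm (e.map_rel_iff (a := u) (b := v))
  have hrange : Set.range F = S := by
    ext x
    constructor
    · rintro ⟨u, rfl⟩
      exact (e u).2
    · intro hx
      exact ⟨e.toEquiv.symm ⟨x, hx⟩,
        congrArg Subtype.val (e.toEquiv.apply_symm_apply ⟨x, hx⟩)⟩
  set b0 : Fin d → Bool := fun _ => false with hb0
  set As : Finset (Fin d) := Finset.univ.filter (fun i => horizAt F b0 i) with hAsdef
  have hAs : ∀ i, i ∈ As ↔ horizAt F b0 i := by
    intro i; simp [hAsdef]
  have hglob : ∀ (u : Fin d → Bool) (i : Fin d), horizAt F u i ↔ horizAt F b0 i :=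
    fun u i => horiz_const hinj hadj (hammingDist u b0) u b0 rfl i
  refine ⟨As.card, ?_, ?_, ?_, ?_⟩
  · calc As.card ≤ Finset.univ.card := Finset.card_filter_le _ _
      _ = d := by simp
  · -- G side
    have hbuild := build (F := F) G Prod.fst As
      (fun u v h => fst_eq hinj hadj (hammingDist u v) u v rfl
        (fun i hi => h i ((hAs i).mpr hi)))
      (fun u i hi => horiz_adj hadj ((hglob u i).mpr ((hAs i).mp hi)))
      (fun u v h hK => (hadj u v).2 (SimpleGraph.boxProd_adj.2 (Or.inl ⟨hK,
        snd_eq hinj hadj (hammingDist u v) u v rfl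
          (fun i hi => h i (fun hmem => hi ((hAs i).mp hmem)))⟩)))
      (fun u v h hfst => hinj (Prod.ext hfst
        (snd_eq hinj hadj (hammingDist u v) u v rfl
          (fun i hi => h i (fun hmem => hi ((hAs i).mp hmem))))))
    rwa [hrange] at hbuild
  · -- H side
    have hcc : Asᶜ.card = d - As.card := by
      rw [Finset.card_compl, Fintype.card_fin]
    have hbuild := build (F := F) H Prod.snd Asᶜ
      (fun u v h => snd_eq hinj hadj (hammingDist u v) u v rfl
        (fun i hi => h i (Finset.mem_compl.mpr (fun hmem => hi ((hAs i).mp hmem)))))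
      (fun u i hi => vert_adj hadj (fun hh =>
        (Finset.mem_compl.mp hi) ((hAs i).mpr ((hglob u i).mp hh))))
      (fun u v h hK => (hadj u v).2 (SimpleGraph.boxProd_adj.2 (Or.inr ⟨hK,
        fst_eq hinj hadj (hammingDist u v) u v rfl
          (fun i hi => h i (fun hmem => (Finset.mem_compl.mp hmem) ((hAs i).mpr hi)))⟩)))
      (fun u v h hsnd => hinj (Prod.ext
        (fst_eq hinj hadj (hammingDist u v) u v rfl
          (fun i hi => h i (fun hmem => (Finset.mem_compl.mp hmem) ((hAs i).mpr hi))))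
        hsnd))
    rw [hcc, hrange] at hbuild
    exact hbuild
  · -- product structure
    apply Set.Subset.antisymm
    · intro x hx
      exact ⟨⟨x, hx, rfl⟩, ⟨x, hx, rfl⟩⟩
    · rintro ⟨p, q⟩ ⟨⟨x1, hx1, hp⟩, ⟨x2, hx2, hq⟩⟩
      rw [← hrange] at hx1 hx2 ⊢
      obtain ⟨u, rfl⟩ := hx1
      obtain ⟨v, rfl⟩ := hx2
      set w : Fin d → Bool := fun i => if horizAt F b0 i then u i else v i with hw
      have h1 : (F w).1 = (F u).1 := fst_eq hinj hadj (hammingDist w u) w u rfl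
        (fun i hi => by simp [hw, show horizAt F b0 i from hi])
      have h2 : (F w).2 = (F v).2 := snd_eq hinj hadj (hammingDist w v) w v rfl
        (fun i hi => by simp [hw, show ¬horizAt F b0 i from hi])
      exact ⟨w, Prod.ext (h1.trans hp) (h2.trans hq)⟩
end

section
/- If G = Q_n(X) is a daisy cube, then its distance cube polynomial with respect to the vertex 0^n satisfies D_{G,0^n}(x,y) = C_G(x + y − 1), where C_G is the cube polynomial of G. -/
namespace DP

variable {n k : ℕ}

def diffs (u v : Fin n → Bool) : Finset (Fin n) := {i | u i ≠ v i}
def supp (u : Fin k → Bool) : Finset (Fin k) := {i | u i = true}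
def wt (u : Fin k → Bool) : ℕ := (supp u).card
def unit (i : Fin k) : Fin k → Bool := fun j => decide (j = i)
def zeroW : Fin k → Bool := fun _ => false
def cubeSet (m : Fin n → Bool) (D : Finset (Fin n)) : Set (Fin n → Bool) :=
  {u | ∀ j ∉ D, u j = m j}
def flipSet (b : Fin n → Bool) (T : Finset (Fin n)) : Fin n → Bool :=
  fun j => if j ∈ T then !(b j) else b j
def goodPair (X : Set (Fin n → Bool)) (p : (Fin n → Bool) × Finset (Fin n)) : Prop :=
  p.1 ∈ daisySet X ∧ ∀ j ∈ p.2, p.1 j = true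
def Phi (X : Set (Fin n → Bool)) (p : (Fin n → Bool) × Finset (Fin n)) :
    Set ↥(daisySet X) := {v | v.1 ∈ cubeSet p.1 p.2}


lemma hammingDist_eq (u v : Fin n → Bool) : hammingDist u v = (diffs u v).card := rfl

lemma mem_diffs {u v : Fin n → Bool} {i : Fin n} : i ∈ diffs u v ↔ u i ≠ v i := by
  simp [diffs]

lemma diffs_eq_empty {u v : Fin n → Bool} : diffs u v = ∅ ↔ u = v := by
  simp [Finset.eq_empty_iff_forall_notMem, mem_diffs, funext_iff]

lemma diffs_comm (u v : Fin n → Bool) : diffs u v = diffs v u := by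
  ext i; simp [mem_diffs, ne_comm]

lemma diffs_triangle (a b c : Fin n → Bool) : diffs a c = symmDiff (diffs a b) (diffs b c) := by
  ext i
  simp only [Finset.mem_symmDiff, mem_diffs]
  rcases Bool.eq_false_or_eq_true (a i) with h1 | h1 <;>
    rcases Bool.eq_false_or_eq_true (b i) with h2 | h2 <;>
      rcases Bool.eq_false_or_eq_true (c i) with h3 | h3 <;> simp [h1, h2, h3]

lemma adj_iff {u v : Fin n → Bool} : (Qcube n).Adj u v ↔ ∃ i, diffs u v = {i} := by
  change hammingDist u v = 1 ↔ _
  rw [hammingDist_eq, Finset.card_eq_one]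

lemma eq_of_diffs_eq {a b c : Fin n → Bool} (h : diffs a b = diffs a c) : b = c := by
  funext i
  have := congrArg (i ∈ ·) h
  simp only [mem_diffs, eq_iff_iff] at this
  rcases Bool.eq_false_or_eq_true (a i) with h1 | h1 <;>
    rcases Bool.eq_false_or_eq_true (b i) with h2 | h2 <;>
      rcases Bool.eq_false_or_eq_true (c i) with h3 | h3 <;> simp_all


lemma four_cycle {a b c d : Fin n → Bool} {i j l m : Fin n}
    (hab : diffs a b = {i}) (hbc : diffs b c = {j}) (hcd : diffs c d = {l})
    (hda : diffs d a = {m}) (hac : a ≠ c) (hbd : b ≠ d) : i = l ∧ j = m := by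
  have e1 : diffs a c = symmDiff ({i} : Finset (Fin n)) {j} := by
    rw [diffs_triangle a b c, hab, hbc]
  have e2 : diffs a c = symmDiff ({m} : Finset (Fin n)) {l} := by
    rw [diffs_triangle a d c, diffs_comm a d, hda, diffs_comm d c, hcd]
  have e3 : diffs b d = symmDiff ({j} : Finset (Fin n)) {l} := by
    rw [diffs_triangle b c d, hbc, hcd]
  have hij : i ≠ j := by
    rintro rfl
    exact hac (diffs_eq_empty.1 (by rw [e1, symmDiff_self]; rfl))
  have hjl : j ≠ l := by
    rintro rfl
    exact hbd (diffs_eq_empty.1 (by rw [e3, symmDiff_self]; rfl))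
  have key : ∀ p : Fin n, (p = i ∧ ¬ p = j ∨ p = j ∧ ¬ p = i) ↔ (p = m ∧ ¬ p = l ∨ p = l ∧ ¬ p = m) := by
    intro p
    have := congrArg (p ∈ ·) (e1.symm.trans e2)
    simpa [Finset.mem_symmDiff] using this
  have hi : i = m ∨ i = l := by
    rcases (key i).1 (Or.inl ⟨rfl, hij⟩) with h | h
    · exact Or.inl h.1
    · exact Or.inr h.1
  have hil : i = l := by
    rcases hi with h | h
    · -- i = m; then j must be l or m, both impossible
      rcases (key j).1 (Or.inr ⟨rfl, fun hh => hij hh.symm⟩) with h2 | h2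
      · exact absurd (h2.1.trans h.symm) (fun hh => hij hh.symm)
      · exact absurd h2.1 hjl
    · exact h
  refine ⟨hil, ?_⟩
  rcases (key j).1 (Or.inr ⟨rfl, fun hh => hij hh.symm⟩) with h2 | h2
  · exact h2.1
  · exact absurd h2.1 hjl

lemma mem_supp {u : Fin k → Bool} {i : Fin k} : i ∈ supp u ↔ u i = true := by simp [supp]

lemma supp_zero : supp (zeroW : Fin k → Bool) = ∅ := by
  simp [Finset.eq_empty_iff_forall_notMem, mem_supp, zeroW]

lemma supp_unit (i : Fin k) : supp (unit i) = {i} := by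
  ext j; simp [mem_supp, unit]

lemma supp_update_false (u : Fin k → Bool) (i : Fin k) :
    supp (Function.update u i false) = (supp u).erase i := by
  ext j
  rcases eq_or_ne j i with rfl | h
  · simp [mem_supp, Function.update_self]
  · simp [mem_supp, Function.update_of_ne h, Finset.mem_erase, h]

lemma eq_zero_of_wt_eq_zero {u : Fin k → Bool} (h : wt u = 0) : u = zeroW := by
  funext j
  have := Finset.card_eq_zero.1 h
  have := Finset.eq_empty_iff_forall_notMem.1 this j
  rw [mem_supp] at this
  simpa [zeroW] using this

lemma eq_unit_of_supp_eq {u : Fin k → Bool} {i : Fin k} (h : supp u = {i}) : u = unit i := by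
  funext j
  have := congrArg (j ∈ ·) h
  simp only [mem_supp, Finset.mem_singleton, eq_iff_iff] at this
  rcases eq_or_ne j i with rfl | hj
  · simp [unit, this.2 rfl]
  · simp [unit, hj]
    cases hju : u j
    · rfl
    · exact absurd (this.1 hju) hj

lemma diffs_update {u : Fin n → Bool} {i : Fin n} {b : Bool} (h : u i ≠ b) :
    diffs u (Function.update u i b) = {i} := by
  ext j
  rcases eq_or_ne j i with rfl | hj
  · simp [mem_diffs, Function.update_self, h]
  · simp [mem_diffs, Function.update_of_ne hj, hj]

lemma symmDiff_erase {s : Finset (Fin n)} {i : Fin n} (h : i ∈ s) :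
    symmDiff s (s.erase i) = {i} := by
  ext j
  rcases eq_or_ne j i with rfl | hj
  · simp [Finset.mem_symmDiff, Finset.mem_erase, h]
  · simp [Finset.mem_symmDiff, Finset.mem_erase, hj]

lemma symmDiff_erase' {s : Finset (Fin n)} {i : Fin n} (h : i ∈ s) :
    symmDiff (s.erase i) ({i} : Finset (Fin n)) = s := by
  ext j
  rcases eq_or_ne j i with rfl | hj
  · simp [Finset.mem_symmDiff, Finset.mem_erase, h]
  · simp [Finset.mem_symmDiff, Finset.mem_erase, hj]

theorem exists_delta (φ : (Fin k → Bool) → (Fin n → Bool)) (hinj : Function.Injective φ)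
    (hadj : ∀ u v : Fin k → Bool, (diffs u v).card = 1 → ∃ c, diffs (φ u) (φ v) = {c}) :
    ∃ δ : Fin k → Fin n, Function.Injective δ ∧
      ∀ u, diffs (φ zeroW) (φ u) = (supp u).image δ := by
  have hadj1 : ∀ i : Fin k, ∃ c, diffs (φ zeroW) (φ (unit i)) = {c} := by
    intro i
    apply hadj
    have : diffs (zeroW : Fin k → Bool) (unit i) = {i} := by
      ext j
      rcases eq_or_ne j i with rfl | hj
      · simp [mem_diffs, zeroW, unit]
      · simp [mem_diffs, zeroW, unit, hj]
    rw [this]; simp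
  choose δ hδ using hadj1
  have hδinj : Function.Injective δ := by
    intro i i' h
    have : φ (unit i) = φ (unit i') := by
      apply eq_of_diffs_eq (a := φ zeroW)
      rw [hδ i, hδ i', h]
    have h2 : unit i = unit i' := hinj this
    have := congrFun h2 i
    simp [unit] at this
    exact this
  refine ⟨δ, hδinj, ?_⟩
  intro u
  -- strong induction on wt u
  suffices H : ∀ t, ∀ u : Fin k → Bool, wt u = t → diffs (φ zeroW) (φ u) = (supp u).image δ by
    exact H (wt u) u rfl
  intro t
  induction t using Nat.strong_induction_on with
  | _ t IH =>
    intro u hu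
    match t, hu with
    | 0, hu =>
      rw [eq_zero_of_wt_eq_zero hu, supp_zero]
      simp [diffs_eq_empty.2 rfl]
    | 1, hu =>
      obtain ⟨i, hi⟩ := Finset.card_eq_one.1 hu
      rw [eq_unit_of_supp_eq hi, hδ i, supp_unit]
      simp
    | (t+2), hu =>
      -- pick two distinct elements of supp u
      have hcard : (supp u).card = t + 2 := hu
      have h2 : 2 ≤ (supp u).card := by omega
      obtain ⟨i, hi⟩ := Finset.card_pos.1 (by omega : 0 < (supp u).card)
      have h1 : 0 < ((supp u).erase i).card := by
        rw [Finset.card_erase_of_mem hi]; omega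
      obtain ⟨i', hi'⟩ := Finset.card_pos.1 h1
      obtain ⟨hii', hi's⟩ := Finset.mem_erase.1 hi'
      set u1 := Function.update u i false with hu1
      set u2 := Function.update u i' false with hu2
      set u12 := Function.update u1 i' false with hu12
      have hsu1 : supp u1 = (supp u).erase i := supp_update_false u i
      have hsu2 : supp u2 = (supp u).erase i' := supp_update_false u i'
      have hsu12 : supp u12 = ((supp u).erase i).erase i' := by
        rw [hu12, supp_update_false, hsu1]
      have hw1 : wt u1 = t + 1 := by
        rw [wt, hsu1, Finset.card_erase_of_mem hi]; omega
      have hw2 : wt u2 = t + 1 := by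
        rw [wt, hsu2, Finset.card_erase_of_mem hi's]; omega
      have hw12 : wt u12 = t := by
        rw [wt, hsu12, Finset.card_erase_of_mem hi', Finset.card_erase_of_mem hi]; omega
      have ih1 := IH (t+1) (by omega) u1 hw1
      have ih2 := IH (t+1) (by omega) u2 hw2
      have ih12 := IH t (by omega) u12 hw12
      have hui : u i = true := mem_supp.1 hi
      have hui' : u i' = true := mem_supp.1 hi's
      -- adjacency diffs
      obtain ⟨c1, hc1⟩ : ∃ c, diffs (φ u) (φ u1) = {c} := by
        apply hadj; rw [diffs_update (by simp [hui])]; simp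
      obtain ⟨c2, hc2⟩ : ∃ c, diffs (φ u2) (φ u) = {c} := by
        apply hadj
        rw [diffs_comm, diffs_update (by simp [hui'])]; simp
      -- computed diffs
      have d1 : diffs (φ u1) (φ u12) = {δ i'} := by
        rw [diffs_triangle (φ u1) (φ zeroW) (φ u12), diffs_comm (φ u1), ih1, ih12,
          ← Finset.image_symmDiff _ _ hδinj, hsu12, ← hsu1, symmDiff_erase (by rw [hsu1]; exact hi')]
        simp
      have d2 : diffs (φ u12) (φ u2) = {δ i} := by
        have hsu12' : supp u12 = (supp u2).erase i := by
          rw [hsu12, hsu2, Finset.erase_right_comm]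
        rw [diffs_triangle (φ u12) (φ zeroW) (φ u2), diffs_comm (φ u12), ih12, ih2,
          ← Finset.image_symmDiff _ _ hδinj, hsu12', symmDiff_comm,
          symmDiff_erase (by rw [hsu2, Finset.mem_erase]; exact ⟨Ne.symm hii', hi⟩)]
        simp
      have h12i : u12 i = false := by
        rw [hu12, Function.update_of_ne (Ne.symm hii'), hu1, Function.update_self]
      have hneq1 : φ u ≠ φ u12 := by
        intro h
        have h' := congrFun (hinj h) i
        rw [h12i, hui] at h'
        simp at h'
      have h1i' : u1 i' = true := by
        rw [hu1, Function.update_of_ne hii', hui']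
      have h2i' : u2 i' = false := by
        rw [hu2, Function.update_self]
      have hneq2 : φ u1 ≠ φ u2 := by
        intro h
        have h' := congrFun (hinj h) i'
        rw [h1i', h2i'] at h'
        simp at h'
      obtain ⟨hc1i, -⟩ := four_cycle hc1 d1 d2 hc2 hneq1 hneq2
      -- conclude
      have hfin : diffs (φ zeroW) (φ u) =
          symmDiff (Finset.image δ ((supp u).erase i)) (Finset.image δ {i}) := by
        rw [diffs_triangle (φ zeroW) (φ u1) (φ u), ih1, diffs_comm (φ u1), hc1, hc1i, hsu1,
          Finset.image_singleton]
      rw [hfin, ← Finset.image_symmDiff _ _ hδinj, symmDiff_erase' hi]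

lemma diffs_flipSet (b : Fin n → Bool) (T : Finset (Fin n)) : diffs b (flipSet b T) = T := by
  ext j
  by_cases h : j ∈ T <;> simp [mem_diffs, flipSet, h]

lemma eq_flipSet_of_diffs {b v : Fin n → Bool} {T : Finset (Fin n)} (h : diffs b v = T) :
    v = flipSet b T :=
  eq_of_diffs_eq (h.trans (diffs_flipSet b T).symm)

lemma mem_cubeSet_self (m : Fin n → Bool) (D : Finset (Fin n)) : m ∈ cubeSet m D :=
  fun _ _ => rfl

/-- Forward: any induced Q_k in Q_n is a subcube with top vertex in S. -/
lemma subcube_of_iso {S : Set (Fin n → Bool)}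
    (e : (Qcube n).induce S ≃g Qcube k) :
    ∃ (m : Fin n → Bool) (D : Finset (Fin n)), D.card = k ∧ (∀ j ∈ D, m j = true) ∧
      m ∈ S ∧ S = cubeSet m D := by
  set φ : (Fin k → Bool) → (Fin n → Bool) := fun w => ((e.symm w : S) : Fin n → Bool) with hφ
  have hinj : Function.Injective φ := by
    intro u v h
    exact e.symm.toEquiv.injective (Subtype.val_injective h)
  have hadj : ∀ u v : Fin k → Bool, (diffs u v).card = 1 → ∃ c, diffs (φ u) (φ v) = {c} := by
    intro u v h
    have hadj' : (Qcube k).Adj u v := by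
      change hammingDist u v = 1
      rw [hammingDist_eq]; exact h
    have := e.symm.map_adj_iff.mpr hadj'
    have h2 : (Qcube n).Adj (φ u) (φ v) := this
    change hammingDist (φ u) (φ v) = 1 at h2
    rw [hammingDist_eq, Finset.card_eq_one] at h2
    exact h2
  obtain ⟨δ, hδinj, hδ⟩ := exists_delta φ hinj hadj
  set b : Fin n → Bool := φ zeroW with hb
  set D : Finset (Fin n) := Finset.image δ Finset.univ with hD
  have hDcard : D.card = k := by
    rw [hD, Finset.card_image_of_injective _ hδinj, Finset.card_univ, Fintype.card_fin]
  set m : Fin n → Bool := fun j => if j ∈ D then true else b j with hm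
  have hφval : ∀ u, φ u = flipSet b ((supp u).image δ) := fun u => eq_flipSet_of_diffs (hδ u)
  have hrange : Set.range φ = cubeSet b D := by
    apply Set.eq_of_subset_of_subset
    · rintro _ ⟨u, rfl⟩
      intro j hj
      rw [hφval u]
      have : j ∉ (supp u).image δ := fun h =>
        hj (by rw [hD]; exact Finset.image_subset_image (Finset.subset_univ _) h)
      simp [flipSet, this]
    · intro u hu
      refine ⟨fun i => xor (u (δ i)) (b (δ i)), ?_⟩
      rw [hφval]
      funext j
      by_cases hj : j ∈ D
      · obtain ⟨i, -, rfl⟩ := Finset.mem_image.1 (hD ▸ hj)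
        have hmem : δ i ∈ (supp (fun i => xor (u (δ i)) (b (δ i)))).image δ ↔
            xor (u (δ i)) (b (δ i)) = true := by
          constructor
          · rintro h
            obtain ⟨i', hi', hii'⟩ := Finset.mem_image.1 h
            cases hδinj hii'
            exact mem_supp.1 hi'
          · intro h
            exact Finset.mem_image_of_mem δ (mem_supp.2 h)
        by_cases hx : xor (u (δ i)) (b (δ i)) = true
        · rw [flipSet]
          simp only [hmem.2 hx, if_true]
          revert hx
          cases u (δ i) <;> cases b (δ i) <;> simp
        · rw [flipSet]
          simp only [hx, iff_false] at hmem
          simp only [hmem, if_false]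
          revert hx
          cases u (δ i) <;> cases b (δ i) <;> simp
      · have : j ∉ (supp (fun i => xor (u (δ i)) (b (δ i)))).image δ := fun h =>
          hj (by rw [hD]; exact Finset.image_subset_image (Finset.subset_univ _) h)
        simp [flipSet, this]
        exact (hu j hj).symm
  have hSrange : S = Set.range φ := by
    apply Set.eq_of_subset_of_subset
    · intro s hs
      exact ⟨e ⟨s, hs⟩, by simp [hφ]⟩
    · rintro _ ⟨u, rfl⟩
      exact (e.symm u).2
  have hmb : ∀ j, j ∉ D → m j = b j := fun j hj => by simp only [hm]; rw [if_neg hj]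
  have hcube_eq : cubeSet b D = cubeSet m D := by
    ext u
    constructor
    · intro hu j hj; rw [hmb j hj]; exact hu j hj
    · intro hu j hj; rw [← hmb j hj]; exact hu j hj
  refine ⟨m, D, hDcard, fun j hj => by simp only [hm]; rw [if_pos hj], ?_, by rw [hSrange, hrange, hcube_eq]⟩
  rw [hSrange, hrange, hcube_eq]
  exact mem_cubeSet_self m D


/-- Backward: a subcube induces a Q_k. -/
lemma iso_of_subcube (m : Fin n → Bool) (D : Finset (Fin n)) (hcard : D.card = k) :
    Nonempty ((Qcube n).induce (cubeSet m D) ≃g Qcube k) := by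
  have σ : Fin k ≃ {x // x ∈ D} := ((D.equivFin).trans (finCongr hcard)).symm
  refine ⟨⟨?_, ?_⟩⟩
  · -- the equiv
    refine
      { toFun := fun u i => u.1 (σ i)
        invFun := fun w => ⟨fun j => if h : j ∈ D then w (σ.symm ⟨j, h⟩) else m j, ?_⟩
        left_inv := ?_
        right_inv := ?_ }
    · intro j hj
      simp [hj]
    · rintro ⟨u, hu⟩
      ext j
      by_cases hj : j ∈ D
      · simp only [hj, dif_pos]
        congr 1
        have : σ (σ.symm ⟨j, hj⟩) = ⟨j, hj⟩ := σ.apply_symm_apply _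
        rw [this]
      · simp only [hj, dif_neg, not_false_iff]
        exact (hu j hj).symm
    · intro w
      funext i
      have hmem : (σ i : Fin n) ∈ D := (σ i).2
      simp only [hmem, dif_pos]
      congr 1
      have : (⟨(σ i : Fin n), hmem⟩ : {x // x ∈ D}) = σ i := Subtype.ext rfl
      rw [this, σ.symm_apply_apply]
  · -- adjacency
    intro u v
    show (Qcube k).Adj _ _ ↔ ((Qcube n).induce (cubeSet m D)).Adj u v
    have key : diffs u.1 v.1 = (diffs (fun i => u.1 (σ i)) (fun i => v.1 (σ i))).image
        (fun i => (σ i : Fin n)) := by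
      ext j
      simp only [Finset.mem_image, mem_diffs]
      constructor
      · intro hj
        have hjD : j ∈ D := by
          by_contra hjD
          exact hj ((u.2 j hjD).trans (v.2 j hjD).symm)
        refine ⟨σ.symm ⟨j, hjD⟩, ?_, ?_⟩
        · rw [σ.apply_symm_apply]; exact hj
        · rw [σ.apply_symm_apply]
      · rintro ⟨i, hi, rfl⟩
        exact hi
    have hcards : hammingDist u.1 v.1 =
        hammingDist (fun i => u.1 (σ i)) (fun i => v.1 (σ i)) := by
      rw [hammingDist_eq, hammingDist_eq, key, Finset.card_image_of_injective]
      intro a b hab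
      exact σ.injective (Subtype.ext hab)
    constructor
    · intro h
      show hammingDist u.1 v.1 = 1
      rw [hcards]; exact h
    · intro h
      show hammingDist (fun i => u.1 (σ i)) (fun i => v.1 (σ i)) = 1
      rw [← hcards]; exact h

/-- Uniqueness of (m, D) parametrization. -/
lemma cubeSet_inj {m m' : Fin n → Bool} {D D' : Finset (Fin n)}
    (hm : ∀ j ∈ D, m j = true) (hm' : ∀ j ∈ D', m' j = true)
    (h : cubeSet m D = cubeSet m' D') : m = m' ∧ D = D' := by
  have key : ∀ (mm : Fin n → Bool) (DD : Finset (Fin n)), (∀ j ∈ DD, mm j = true) →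
      ∀ j, j ∈ DD ↔ ∃ u ∈ cubeSet mm DD, ∃ v ∈ cubeSet mm DD, u j ≠ v j := by
    intro mm DD hmm j
    constructor
    · intro hj
      refine ⟨mm, mem_cubeSet_self mm DD, Function.update mm j false, ?_, ?_⟩
      · intro p hp
        rw [Function.update_of_ne]
        rintro rfl; exact hp hj
      · rw [Function.update_self, hmm j hj]
        simp
    · rintro ⟨u, hu, v, hv, huv⟩
      by_contra hj
      exact huv ((hu j hj).trans (hv j hj).symm)
  have hDD : D = D' := by
    ext j
    rw [key m D hm j, key m' D' hm' j, h]
  subst hDD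
  refine ⟨?_, rfl⟩
  have hmem : m ∈ cubeSet m' D := h ▸ mem_cubeSet_self m D
  funext j
  by_cases hj : j ∈ D
  · rw [hm j hj, hm' j hj]
  · exact hmem j hj

/-- cubeSet is downward closed under its top. -/
lemma cubeSet_le {m : Fin n → Bool} {D : Finset (Fin n)} (hm : ∀ j ∈ D, m j = true)
    {u : Fin n → Bool} (hu : u ∈ cubeSet m D) : u ≤ m := by
  intro j
  by_cases hj : j ∈ D
  · rw [hm j hj]; exact Bool.le_true _
  · rw [hu j hj]


variable {XX : Set (Fin n → Bool)}

lemma daisy_down {X : Set (Fin n → Bool)} {u v : Fin n → Bool} (huv : u ≤ v)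
    (hv : v ∈ daisySet X) : u ∈ daisySet X := by
  obtain ⟨x, hx, hvx⟩ := hv
  exact ⟨x, hx, le_trans huv hvx⟩

lemma hamming_zero (u : Fin n → Bool) : hammingDist zeroW u = wt u := by
  rw [hammingDist_eq]
  congr 1
  ext j
  rcases Bool.eq_false_or_eq_true (u j) with h | h <;> simp [mem_diffs, mem_supp, zeroW, h]

lemma walk_lower {a b : ↥(daisySet X)} (W : ((Qcube n).induce (daisySet X)).Walk a b) :
    hammingDist a.1 b.1 ≤ W.length := by
  induction W with
  | nil => simp [hammingDist_self]
  | cons h p ih =>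
    rename_i u v w
    have hadj : hammingDist u.1 v.1 = 1 := h
    calc hammingDist u.1 w.1 ≤ hammingDist u.1 v.1 + hammingDist v.1 w.1 :=
          hammingDist_triangle _ _ _
      _ ≤ 1 + p.length := by rw [hadj]; exact Nat.add_le_add_left ih 1
      _ = (SimpleGraph.Walk.cons h p).length := by simp [Nat.add_comm]

lemma walk_upper (h0 : (fun _ => false) ∈ daisySet X) :
    ∀ (t : ℕ) (u : Fin n → Bool) (hu : u ∈ daisySet X), wt u = t →
      ∃ W : ((Qcube n).induce (daisySet X)).Walk ⟨fun _ => false, h0⟩ ⟨u, hu⟩,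
        W.length = wt u := by
  intro t
  induction t with
  | zero =>
    intro u hu hwt
    have : u = zeroW := eq_zero_of_wt_eq_zero hwt
    subst this
    exact ⟨SimpleGraph.Walk.nil.copy rfl (by rfl), by rw [hwt]; rfl⟩
  | succ t ih =>
    intro u hu hwt
    have : 0 < (supp u).card := by rw [← wt]; omega
    obtain ⟨i, hi⟩ := Finset.card_pos.1 this
    set u' := Function.update u i false with hu'
    have hle : u' ≤ u := by
      intro j
      rcases eq_or_ne j i with rfl | hj
      · rw [hu', Function.update_self]; exact Bool.false_le _
      · rw [hu', Function.update_of_ne hj]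
    have hu'd : u' ∈ daisySet X := daisy_down hle hu
    have hwt' : wt u' = t := by
      rw [wt, hu', supp_update_false, Finset.card_erase_of_mem hi]
      rw [wt] at hwt; omega
    obtain ⟨W', hW'⟩ := ih u' hu'd hwt'
    have hadj : ((Qcube n).induce (daisySet X)).Adj ⟨u', hu'd⟩ ⟨u, hu⟩ := by
      show hammingDist u' u = 1
      rw [hammingDist_eq, diffs_comm, diffs_update (by rw [mem_supp.1 hi]; simp)]
      · simp
    exact ⟨W'.concat hadj, by rw [SimpleGraph.Walk.length_concat, hW', hwt', hwt]⟩

lemma dist_eq_wt (h0 : (fun _ => false) ∈ daisySet X) (u : Fin n → Bool)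
    (hu : u ∈ daisySet X) :
    ((Qcube n).induce (daisySet X)).dist ⟨fun _ => false, h0⟩ ⟨u, hu⟩ = wt u := by
  obtain ⟨W, hW⟩ := walk_upper h0 (wt u) u hu rfl
  apply le_antisymm
  · exact hW ▸ SimpleGraph.dist_le W
  · obtain ⟨P, hP⟩ := (SimpleGraph.Walk.reachable W).exists_walk_length_eq_dist
    calc wt u = hammingDist zeroW u := (hamming_zero u).symm
      _ ≤ P.length := walk_lower P
      _ = _ := hP


variable {X : Set (Fin n → Bool)}

/-- transfer iso through nested induce -/
noncomputable def induceInduce {V : Type*} (G : SimpleGraph V) (A : Set V) (S : Set ↥A) :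
    (G.induce A).induce S ≃g G.induce (Subtype.val '' S) where
  toEquiv := Equiv.Set.image Subtype.val S Subtype.val_injective
  map_rel_iff' := Iff.rfl

lemma cubeSet_subset_daisy {p : (Fin n → Bool) × Finset (Fin n)} (hp : goodPair X p) :
    cubeSet p.1 p.2 ⊆ daisySet X :=
  fun _ hu => daisy_down (cubeSet_le hp.2 hu) hp.1

lemma image_Phi {p : (Fin n → Bool) × Finset (Fin n)} (hp : goodPair X p) :
    Subtype.val '' Phi X p = cubeSet p.1 p.2 := by
  show Subtype.val '' (Subtype.val ⁻¹' cubeSet p.1 p.2) = _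
  rw [Set.image_preimage_eq_inter_range]
  rw [Subtype.range_coe]
  exact Set.inter_eq_self_of_subset_left (cubeSet_subset_daisy hp)

lemma iso_iff_good (S : Set ↥(daisySet X)) :
    Nonempty (((Qcube n).induce (daisySet X)).induce S ≃g Qcube k) ↔
      ∃ p, goodPair X p ∧ p.2.card = k ∧ S = Phi X p := by
  constructor
  · rintro ⟨e⟩
    have e' : (Qcube n).induce (Subtype.val '' S) ≃g Qcube k :=
      (induceInduce (Qcube n) (daisySet X) S).symm.trans e
    obtain ⟨m, D, hcard, hm, hmem, hS⟩ := subcube_of_iso e'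
    refine ⟨(m, D), ⟨?_, hm⟩, hcard, ?_⟩
    · obtain ⟨⟨v, hv⟩, -, rfl⟩ := hmem
      exact hv
    · have : Subtype.val '' S = Subtype.val '' Phi X (m, D) := by
        rw [image_Phi ⟨by obtain ⟨⟨v, hv⟩, -, rfl⟩ := hmem; exact hv, hm⟩]
        exact hS
      exact Set.image_injective.mpr Subtype.val_injective this
  · rintro ⟨p, hp, hcard, rfl⟩
    obtain ⟨e⟩ := iso_of_subcube p.1 p.2 hcard
    refine ⟨(induceInduce (Qcube n) (daisySet X) (Phi X p)).trans ?_⟩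
    rw [image_Phi hp]
    exact e

lemma Phi_injOn : Set.InjOn (Phi X) {p | goodPair X p} := by
  intro p hp q hq h
  have himg : cubeSet p.1 p.2 = cubeSet q.1 q.2 := by
    rw [← image_Phi hp, ← image_Phi hq, h]
  obtain ⟨h1, h2⟩ := cubeSet_inj hp.2 hq.2 himg
  exact Prod.ext h1 h2

lemma card_le_wt {p : (Fin n → Bool) × Finset (Fin n)} (hp : goodPair X p) :
    p.2.card ≤ wt p.1 := by
  apply Finset.card_le_card
  intro j hj
  exact mem_supp.2 (hp.2 j hj)

lemma distToSet_Phi (h0 : (fun _ => false) ∈ daisySet X)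
    {p : (Fin n → Bool) × Finset (Fin n)} (hp : goodPair X p) :
    distToSet ((Qcube n).induce (daisySet X)) ⟨fun _ => false, h0⟩ (Phi X p) =
      wt p.1 - p.2.card := by
  set b0 : Fin n → Bool := fun j => if j ∈ p.2 then false else p.1 j with hb0
  have hb0mem : b0 ∈ cubeSet p.1 p.2 := by
    intro j hj; rw [hb0]; simp [hj]
  have hb0daisy : b0 ∈ daisySet X := cubeSet_subset_daisy hp hb0mem
  have hsupp : supp b0 = supp p.1 \ p.2 := by
    ext j
    by_cases hj : j ∈ p.2 <;> simp [mem_supp, hb0, hj, Finset.mem_sdiff, mem_supp]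
  have hwtb0 : wt b0 = wt p.1 - p.2.card := by
    rw [wt, hsupp, Finset.card_sdiff_of_subset (fun j hj => mem_supp.2 (hp.2 j hj))]
    rfl
  have hdist : ∀ v : ↥(daisySet X), v ∈ Phi X p →
      ((Qcube n).induce (daisySet X)).dist ⟨fun _ => false, h0⟩ v = wt v.1 := by
    rintro ⟨v, hv⟩ _
    exact dist_eq_wt h0 v hv
  rw [distToSet]
  apply le_antisymm
  · apply Nat.sInf_le
    exact ⟨⟨b0, hb0daisy⟩, hb0mem, by rw [hdist ⟨b0, hb0daisy⟩ hb0mem, hwtb0]⟩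
  · apply le_csInf
    · exact ⟨_, ⟨⟨b0, hb0daisy⟩, hb0mem, rfl⟩⟩
    · rintro _ ⟨v, hv, rfl⟩
      rw [hdist v hv, ← hwtb0]
      apply Finset.card_le_card
      intro j hj
      rw [hsupp, Finset.mem_sdiff] at hj
      exact mem_supp.2 ((hv j hj.2).symm ▸ mem_supp.1 hj.1)

lemma distCubeCount_eq (h0 : (fun _ => false) ∈ daisySet X) (k d : ℕ) :
    distCubeCount ((Qcube n).induce (daisySet X)) ⟨fun _ => false, h0⟩ k d =
      Set.ncard {p : (Fin n → Bool) × Finset (Fin n) |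
        goodPair X p ∧ p.2.card = k ∧ wt p.1 = k + d} := by
  rw [distCubeCount]
  have hset : {S : Set ↥(daisySet X) |
      Nonempty ((((Qcube n).induce (daisySet X)).induce S) ≃g Qcube k) ∧
        distToSet ((Qcube n).induce (daisySet X)) ⟨fun _ => false, h0⟩ S = d} =
      Phi X '' {p | goodPair X p ∧ p.2.card = k ∧ wt p.1 = k + d} := by
    ext S
    simp only [Set.mem_setOf_eq, Set.mem_image]
    constructor
    · rintro ⟨hiso, hd⟩
      obtain ⟨p, hp, hcard, rfl⟩ := (iso_iff_good S).1 hiso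
      refine ⟨p, ⟨hp, hcard, ?_⟩, rfl⟩
      rw [distToSet_Phi h0 hp] at hd
      have := card_le_wt hp
      omega
    · rintro ⟨p, ⟨hp, hcard, hwt⟩, rfl⟩
      refine ⟨(iso_iff_good _).2 ⟨p, hp, hcard, rfl⟩, ?_⟩
      rw [distToSet_Phi h0 hp]
      omega
  rw [hset, Set.ncard_image_of_injOn (Phi_injOn.mono (fun p hp => hp.1))]

lemma cubeCount_eq (k : ℕ) :
    cubeCount ((Qcube n).induce (daisySet X)) k =
      Set.ncard {p : (Fin n → Bool) × Finset (Fin n) | goodPair X p ∧ p.2.card = k} := by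
  rw [cubeCount]
  have hset : {S : Set ↥(daisySet X) |
      Nonempty ((((Qcube n).induce (daisySet X)).induce S) ≃g Qcube k)} =
      Phi X '' {p | goodPair X p ∧ p.2.card = k} := by
    ext S
    simp only [Set.mem_setOf_eq, Set.mem_image]
    constructor
    · intro hiso
      obtain ⟨p, hp, hcard, rfl⟩ := (iso_iff_good S).1 hiso
      exact ⟨p, ⟨hp, hcard⟩, rfl⟩
    · rintro ⟨p, ⟨hp, hcard⟩, rfl⟩
      exact (iso_iff_good _).2 ⟨p, hp, hcard, rfl⟩
  rw [hset, Set.ncard_image_of_injOn (Phi_injOn.mono (fun p hp => hp.1))]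

lemma powerset_sum (s : Finset (Fin n)) (x y : ℝ) :
    ∑ D ∈ s.powerset, x ^ D.card * y ^ (s.card - D.card) = (x + y) ^ s.card := by
  rw [Finset.sum_powerset_apply_card (fun j => x ^ j * y ^ (s.card - j)), add_pow]
  apply Finset.sum_congr rfl
  intro j hj
  rw [nsmul_eq_mul]
  ring

lemma powerset_sum' (s : Finset (Fin n)) (t : ℝ) :
    ∑ D ∈ s.powerset, t ^ D.card = (t + 1) ^ s.card := by
  have := powerset_sum s t 1
  simp only [one_pow, mul_one] at this
  exact this


end DP

open DP in
theorem distCubePolynomial_of_daisy_cube_eq_cubePolynomial (n : ℕ)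
    (X : Set (Fin n → Bool)) (h0 : (fun _ => false) ∈ daisySet X) (x y : ℝ) :
    ∑ k ∈ Finset.range (2 ^ n + 1), ∑ d ∈ Finset.range (2 ^ n + 1),
      (distCubeCount ((Qcube n).induce (daisySet X)) ⟨fun _ => false, h0⟩ k d : ℝ)
        * x ^ k * y ^ d =
    ∑ k ∈ Finset.range (2 ^ n + 1),
      (cubeCount ((Qcube n).induce (daisySet X)) k : ℝ) * (x + y - 1) ^ k := by
  classical
  set GPF : Finset ((Fin n → Bool) × Finset (Fin n)) :=
    Finset.univ.filter (fun p => goodPair X p) with hGPF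
  have hGPFmem : ∀ p, p ∈ GPF ↔ goodPair X p := by
    intro p; rw [hGPF]; simp
  set DF : Finset (Fin n → Bool) := Finset.univ.filter (fun u => u ∈ daisySet X) with hDF
  have hDFmem : ∀ u, u ∈ DF ↔ u ∈ daisySet X := by
    intro u; rw [hDF]; simp
  -- counts as filter cards
  have hcount1 : ∀ k d : ℕ,
      distCubeCount ((Qcube n).induce (daisySet X)) ⟨fun _ => false, h0⟩ k d =
        (GPF.filter (fun p => p.2.card = k ∧ wt p.1 = k + d)).card := by
    intro k d
    rw [distCubeCount_eq h0 k d, ← Set.ncard_coe_finset]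
    congr 1
    ext p
    simp [hGPFmem p, Finset.mem_filter, and_assoc]
  have hcount2 : ∀ k : ℕ,
      cubeCount ((Qcube n).induce (daisySet X)) k =
        (GPF.filter (fun p => p.2.card = k)).card := by
    intro k
    rw [cubeCount_eq k, ← Set.ncard_coe_finset]
    congr 1
    ext p
    simp [hGPFmem p, Finset.mem_filter]
  have hcardn : ∀ p : (Fin n → Bool) × Finset (Fin n), p.2.card < 2 ^ n + 1 := by
    intro p
    have h1 : p.2.card ≤ n := by
      have := Finset.card_le_card (Finset.subset_univ p.2)
      simpa using this
    have := Nat.lt_two_pow_self (n := n)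
    omega
  have hwtn : ∀ u : Fin n → Bool, wt u < 2 ^ n + 1 := by
    intro u
    have h1 : (supp u).card ≤ n := by
      have := Finset.card_le_card (Finset.subset_univ (supp u))
      simpa using this
    have := Nat.lt_two_pow_self (n := n)
    rw [wt]; omega
  -- LHS
  have hL : ∑ k ∈ Finset.range (2 ^ n + 1), ∑ d ∈ Finset.range (2 ^ n + 1),
      (distCubeCount ((Qcube n).induce (daisySet X)) ⟨fun _ => false, h0⟩ k d : ℝ)
        * x ^ k * y ^ d =
      ∑ p ∈ GPF, x ^ p.2.card * y ^ (wt p.1 - p.2.card) := by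
    rw [← Finset.sum_fiberwise_of_maps_to
      (g := fun p : (Fin n → Bool) × Finset (Fin n) => (p.2.card, wt p.1 - p.2.card))
      (t := Finset.range (2 ^ n + 1) ×ˢ Finset.range (2 ^ n + 1))
      (fun p _ => by
        simp only [Finset.mem_product, Finset.mem_range]
        exact ⟨hcardn p, lt_of_le_of_lt (Nat.sub_le _ _) (hwtn p.1)⟩)
      (fun p => x ^ p.2.card * y ^ (wt p.1 - p.2.card)),
      ← Finset.sum_product']
    apply Finset.sum_congr rfl
    rintro ⟨k, d⟩ hq
    have hfilter : GPF.filter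
        (fun p => (p.2.card, wt p.1 - p.2.card) = (k, d)) =
        GPF.filter (fun p => p.2.card = k ∧ wt p.1 = k + d) := by
      apply Finset.filter_congr
      intro p hp
      have hle := card_le_wt (X := X) ((hGPFmem p).1 hp)
      simp only [Prod.mk.injEq]
      constructor
      · rintro ⟨h1, h2⟩; exact ⟨h1, by omega⟩
      · rintro ⟨h1, h2⟩; exact ⟨h1, by omega⟩
    rw [hfilter]
    rw [Finset.sum_congr rfl (fun p hp => ?_), Finset.sum_const, nsmul_eq_mul,
      hcount1 k d, mul_assoc]
    obtain ⟨-, h1, h2⟩ := Finset.mem_filter.1 hp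
    rw [h1, h2]
    congr 2
    omega
  -- RHS
  have hR : ∑ k ∈ Finset.range (2 ^ n + 1),
      (cubeCount ((Qcube n).induce (daisySet X)) k : ℝ) * (x + y - 1) ^ k =
      ∑ p ∈ GPF, (x + y - 1) ^ p.2.card := by
    rw [← Finset.sum_fiberwise_of_maps_to
      (g := fun p : (Fin n → Bool) × Finset (Fin n) => p.2.card)
      (t := Finset.range (2 ^ n + 1))
      (fun p _ => Finset.mem_range.2 (hcardn p))
      (fun p => (x + y - 1 : ℝ) ^ p.2.card)]
    apply Finset.sum_congr rfl
    intro k hk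
    rw [Finset.sum_congr rfl (fun p hp => ?_), Finset.sum_const, nsmul_eq_mul, hcount2 k]
    obtain ⟨-, h1⟩ := Finset.mem_filter.1 hp
    rw [h1]
  rw [hL, hR]
  -- middle: group by first coordinate
  rw [← Finset.sum_fiberwise_of_maps_to (g := Prod.fst) (t := DF)
      (fun p hp => (hDFmem p.1).2 ((hGPFmem p).1 hp).1)
      (fun p => x ^ p.2.card * y ^ (wt p.1 - p.2.card)),
    ← Finset.sum_fiberwise_of_maps_to (g := Prod.fst) (t := DF)
      (fun p hp => (hDFmem p.1).2 ((hGPFmem p).1 hp).1)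
      (fun p => (x + y - 1 : ℝ) ^ p.2.card)]
  apply Finset.sum_congr rfl
  intro m hm
  have hmd : m ∈ daisySet X := (hDFmem m).1 hm
  have hfib : GPF.filter (fun p => p.1 = m) =
      (supp m).powerset.image (fun D => (m, D)) := by
    ext p
    simp only [Finset.mem_filter, Finset.mem_image, Finset.mem_powerset, hGPFmem]
    constructor
    · rintro ⟨⟨-, h2⟩, rfl⟩
      exact ⟨p.2, fun j hj => mem_supp.2 (h2 j hj), rfl⟩
    · rintro ⟨D, hD, rfl⟩
      exact ⟨⟨hmd, fun j hj => mem_supp.1 (hD hj)⟩, rfl⟩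
  have hinj : ∀ a ∈ (supp m).powerset, ∀ b ∈ (supp m).powerset,
      (fun D => (m, D)) a = (fun D => (m, D)) b → a = b := by
    intro a _ b _ h
    simpa using h
  rw [hfib, Finset.sum_image hinj, Finset.sum_image hinj]
  have h1 : ∑ D ∈ (supp m).powerset, x ^ D.card * y ^ (wt m - D.card) = (x + y) ^ wt m :=
    powerset_sum (supp m) x y
  have h2 : ∑ D ∈ (supp m).powerset, (x + y - 1 : ℝ) ^ D.card = (x + y - 1 + 1) ^ wt m :=
    powerset_sum' (supp m) (x + y - 1)
  rw [h1, h2]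
  congr 1
  ring
end

section
/- If G = Q_n(X) is a daisy cube, then C_G(x) = W_{G,0^n}(x + 1), where C_G is the cube polynomial of G and W_{G,0^n} is the counting polynomial of the number of vertices of G at a given distance from 0^n. -/
open Finset

def dffs {n : ℕ} (u v : Fin n → Bool) : Finset (Fin n) :=
  Finset.univ.filter (fun j => u j ≠ v j)

lemma mem_dffs {n : ℕ} {u v : Fin n → Bool} {j : Fin n} :
    j ∈ dffs u v ↔ u j ≠ v j := by unfold dffs; simp

lemma hamming_dffs {n : ℕ} (u v : Fin n → Bool) : hammingDist u v = (dffs u v).card := rfl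

lemma dffs_comm {n : ℕ} (u v : Fin n → Bool) : dffs u v = dffs v u := by
  ext j; rw [mem_dffs, mem_dffs]; exact ne_comm

def bflip {k : ℕ} (b : Fin k → Bool) (i : Fin k) : Fin k → Bool :=
  Function.update b i (!b i)

lemma bflip_apply_self {k : ℕ} (b : Fin k → Bool) (i : Fin k) : bflip b i i = !b i := by
  simp [bflip]

lemma bflip_apply_ne {k : ℕ} (b : Fin k → Bool) {i j : Fin k} (h : j ≠ i) :
    bflip b i j = b j := by simp [bflip, Function.update_of_ne h]

lemma dffs_bflip {k : ℕ} (b : Fin k → Bool) (i : Fin k) : dffs b (bflip b i) = {i} := by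
  ext j
  rcases eq_or_ne j i with rfl | hj
  · simp [mem_dffs, bflip_apply_self]
  · simp [mem_dffs, bflip_apply_ne b hj, hj]

lemma hamming_bflip {k : ℕ} (b : Fin k → Bool) (i : Fin k) : hammingDist b (bflip b i) = 1 := by
  rw [hamming_dffs, dffs_bflip]; simp

lemma bflip_bflip {k : ℕ} (b : Fin k → Bool) (i : Fin k) : bflip (bflip b i) i = b := by
  funext j
  rcases eq_or_ne j i with rfl | hj
  · simp [bflip]
  · simp [bflip, Function.update_of_ne hj]

lemma bflip_comm {k : ℕ} (b : Fin k → Bool) {i i' : Fin k} (h : i ≠ i') :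
    bflip (bflip b i) i' = bflip (bflip b i') i := by
  funext j
  rcases eq_or_ne j i with rfl | hj
  · rw [bflip_apply_ne _ h, bflip_apply_self, bflip_apply_self, bflip_apply_ne _ h]
  · rcases eq_or_ne j i' with rfl | hj'
    · rw [bflip_apply_self, bflip_apply_ne _ hj, bflip_apply_ne _ (Ne.symm h), bflip_apply_self]
    · rw [bflip_apply_ne _ hj', bflip_apply_ne _ hj, bflip_apply_ne _ hj, bflip_apply_ne _ hj']

lemma bool_xor_iff {x y z : Bool} {P Q : Prop} (h1 : x ≠ y ↔ P) (h2 : y ≠ z ↔ Q) :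
    (x ≠ z) ↔ ¬(P ↔ Q) := by
  rw [← h1, ← h2]; cases x <;> cases y <;> cases z <;> simp

lemma fun_eq_of_not_ne {n : ℕ} {u v : Fin n → Bool} (h : ∀ j, ¬(u j ≠ v j)) : u = v :=
  funext fun j => not_not.mp (h j)

theorem subcube_classify {n k : ℕ} (ψ : (Fin k → Bool) → (Fin n → Bool))
    (hinj : Function.Injective ψ)
    (hadj : ∀ b b', hammingDist (ψ b) (ψ b') = 1 ↔ hammingDist b b' = 1) :
    ∃ c : Fin k → Fin n, Function.Injective c ∧
      ∀ b j, (ψ b j ≠ ψ (fun _ => false) j ↔ ∃ i, c i = j ∧ b i = true) := by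
  classical
  have hex : ∀ (b : Fin k → Bool) (i : Fin k), ∃ a, dffs (ψ b) (ψ (bflip b i)) = {a} := by
    intro b i
    have h1 : hammingDist (ψ b) (ψ (bflip b i)) = 1 := (hadj _ _).2 (hamming_bflip b i)
    rw [hamming_dffs] at h1
    exact Finset.card_eq_one.1 h1
  choose cc hcc using hex
  have hcc' : ∀ b i j, (ψ b j ≠ ψ (bflip b i) j) ↔ j = cc b i := by
    intro b i j
    rw [← mem_dffs, hcc b i, Finset.mem_singleton]
  have hself : ∀ b i, cc (bflip b i) i = cc b i := by
    intro b i
    have h2 := hcc (bflip b i) i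
    rw [bflip_bflip, dffs_comm, hcc b i] at h2
    exact (Finset.singleton_inj.1 h2).symm
  have hsq : ∀ b i i', i ≠ i' → cc (bflip b i') i = cc b i := by
    intro b i i' hii
    have Ha := hcc' b i
    have Hc := hcc' b i'
    have Hb := hcc' (bflip b i) i'
    have Hd := hcc' (bflip b i') i
    rw [← bflip_comm _ hii] at Hd
    set w := bflip (bflip b i) i' with hw
    have hbw : b ≠ w := by
      intro h
      have := congrFun h i
      rw [hw, bflip_apply_ne _ hii, bflip_apply_self] at this
      simp at this
    have hvz : bflip b i ≠ bflip b i' := by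
      intro h
      have := congrFun h i
      rw [bflip_apply_self, bflip_apply_ne _ hii] at this
      simp at this
    have key1 : ∀ j, (ψ b j ≠ ψ w j) ↔ ¬((j = cc b i) ↔ (j = cc (bflip b i) i')) :=
      fun j => bool_xor_iff (Ha j) (Hb j)
    have key2 : ∀ j, (ψ b j ≠ ψ w j) ↔ ¬((j = cc b i') ↔ (j = cc (bflip b i') i)) :=
      fun j => bool_xor_iff (Hc j) (Hd j)
    have hab : cc b i ≠ cc (bflip b i) i' := by
      intro h
      apply hbw; apply hinj; apply fun_eq_of_not_ne
      intro j hj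
      rw [key1 j] at hj
      exact hj (by rw [h])
    have hcd : cc b i' ≠ cc (bflip b i') i := by
      intro h
      apply hbw; apply hinj; apply fun_eq_of_not_ne
      intro j hj
      rw [key2 j] at hj
      exact hj (by rw [h])
    have hac : cc b i ≠ cc b i' := by
      intro h
      apply hvz; apply hinj; apply fun_eq_of_not_ne
      intro j hj
      have keyvz : (ψ (bflip b i) j ≠ ψ (bflip b i') j) ↔ ¬((j = cc b i) ↔ (j = cc b i')) :=
        bool_xor_iff (ne_comm.trans (Ha j)) (Hc j)
      rw [keyvz] at hj
      exact hj (by rw [h])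
    have hmain := (key1 (cc b i)).symm.trans (key2 (cc b i))
    simp only [eq_self_iff_true, true_iff] at hmain
    by_contra hne
    tauto
  -- constancy of cc
  have hstep : ∀ b i l, cc (bflip b l) i = cc b i := by
    intro b i l
    rcases eq_or_ne i l with rfl | h
    · exact hself b i
    · exact hsq b i l h
  set z : Fin k → Bool := fun _ => false with hz
  have hconst : ∀ b i, cc b i = cc z i := by
    intro b i
    have : ∀ (m : ℕ) (b : Fin k → Bool), (Finset.univ.filter fun l => b l = true).card ≤ m →
        cc b i = cc z i := by
      intro m
      induction m with
      | zero =>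
        intro b hb
        have : b = z := by
          funext l
          by_contra hl
          have : l ∈ Finset.univ.filter fun l => b l = true := by
            simp only [Finset.mem_filter, Finset.mem_univ, true_and]
            cases hbl : b l
            · exact absurd (by rw [hbl]) hl
            · rfl
          have := Finset.card_pos.2 ⟨l, this⟩
          omega
        rw [this]
      | succ m ih =>
        intro b hb
        by_cases hbz : b = z
        · rw [hbz]
        · have : ∃ l, b l = true := by
            by_contra h
            push_neg at h
            exact hbz (funext fun l => by simpa using (Bool.not_eq_true _).mp (h l))
          obtain ⟨l, hl⟩ := this
          set b' := bflip b l with hb'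
          have hbb' : b = bflip b' l := by rw [hb', bflip_bflip]
          have hcard : (Finset.univ.filter fun t => b' t = true).card ≤ m := by
            have hsub : (Finset.univ.filter fun t => b' t = true) ⊆
                (Finset.univ.filter fun t => b t = true).erase l := by
              intro t ht
              simp only [Finset.mem_filter, Finset.mem_univ, true_and] at ht
              rcases eq_or_ne t l with rfl | htl
              · rw [hb', bflip_apply_self, hl] at ht; simp at ht
              · rw [hb', bflip_apply_ne _ htl] at ht
                exact Finset.mem_erase.2 ⟨htl, by simp [ht]⟩
            have h2 := Finset.card_le_card hsub
            have h3 : l ∈ Finset.univ.filter fun t => b t = true := by simp [hl]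
            have h4 := Finset.card_erase_of_mem h3
            omega
          calc cc b i = cc (bflip b' l) i := by rw [← hbb']
            _ = cc b' i := hstep b' i l
            _ = cc z i := ih b' hcard
    exact this _ b le_rfl
  have hcinj : Function.Injective (fun i => cc z i) := by
    intro i i' h
    change cc z i = cc z i' at h
    by_contra hne
    have H1 := hcc' z i
    have H2 := hcc' z i'
    apply absurd (hinj (fun_eq_of_not_ne (u := ψ (bflip z i)) (v := ψ (bflip z i')) ?_))
    · intro heq
      have := congrFun heq i
      rw [bflip_apply_self, bflip_apply_ne _ hne] at this
      simp [hz] at this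
    · intro j hj
      have keyvz : (ψ (bflip z i) j ≠ ψ (bflip z i') j) ↔ ¬((j = cc z i) ↔ (j = cc z i')) :=
        bool_xor_iff (ne_comm.trans (H1 j)) (H2 j)
      rw [keyvz] at hj
      exact hj (by rw [h])
  refine ⟨fun i => cc z i, hcinj, ?_⟩
  intro b
  have main : ∀ (m : ℕ) (b : Fin k → Bool), (Finset.univ.filter fun l => b l = true).card ≤ m →
      ∀ j, (ψ b j ≠ ψ z j ↔ ∃ i, cc z i = j ∧ b i = true) := by
    intro m
    induction m with
    | zero =>
      intro b hb j
      have hbz : b = z := by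
        funext l
        by_contra hl
        have : l ∈ Finset.univ.filter fun t => b t = true := by
          simp only [Finset.mem_filter, Finset.mem_univ, true_and]
          cases hbl : b l
          · exact absurd (by rw [hbl]) hl
          · rfl
        have := Finset.card_pos.2 ⟨l, this⟩
        omega
      subst hbz
      simp [hz]
    | succ m ih =>
      intro b hb j
      by_cases hbz : b = z
      · subst hbz; simp [hz]
      · have : ∃ l, b l = true := by
          by_contra h
          push_neg at h
          exact hbz (funext fun l => by simpa using (Bool.not_eq_true _).mp (h l))
        obtain ⟨l, hl⟩ := this
        set b' := bflip b l with hb'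
        have hbb' : b = bflip b' l := by rw [hb', bflip_bflip]
        have hb'l : b' l = false := by rw [hb', bflip_apply_self, hl]; rfl
        have hb'ne : ∀ t, t ≠ l → b' t = b t := fun t ht => bflip_apply_ne _ ht
        have hcard : (Finset.univ.filter fun t => b' t = true).card ≤ m := by
          have hsub : (Finset.univ.filter fun t => b' t = true) ⊆
              (Finset.univ.filter fun t => b t = true).erase l := by
            intro t ht
            simp only [Finset.mem_filter, Finset.mem_univ, true_and] at ht
            rcases eq_or_ne t l with rfl | htl
            · rw [hb'l] at ht; simp at ht
            · exact Finset.mem_erase.2 ⟨htl, by simp [← hb'ne t htl, ht]⟩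
          have h2 := Finset.card_le_card hsub
          have h3 : l ∈ Finset.univ.filter fun t => b t = true := by simp [hl]
          have h4 := Finset.card_erase_of_mem h3
          omega
        have IH := ih b' hcard j
        have Hedge : (ψ b' j ≠ ψ b j) ↔ j = cc z l := by
          rw [hbb', hcc' b' l j, hconst b' l]
        have key : (ψ b j ≠ ψ z j) ↔ ¬((j = cc z l) ↔ (∃ i, cc z i = j ∧ b' i = true)) :=
          bool_xor_iff (ne_comm.trans Hedge) IH
        rw [key]
        constructor
        · intro h
          by_cases hj : j = cc z l
          · exact ⟨l, hj.symm, hl⟩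
          · have : ∃ i, cc z i = j ∧ b' i = true := by tauto
            obtain ⟨i, hi1, hi2⟩ := this
            have hil : i ≠ l := fun h' => by rw [h', hb'l] at hi2; exact Bool.noConfusion hi2
            exact ⟨i, hi1, by rw [← hb'ne i hil]; exact hi2⟩
        · rintro ⟨i, hi1, hi2⟩
          rcases eq_or_ne i l with heq | hil
          · rw [heq] at hi1
            intro hiff
            obtain ⟨i', hi'1, hi'2⟩ := hiff.1 hi1.symm
            have : i' = l := hcinj (show cc z i' = cc z l from hi'1.trans hi1.symm)
            rw [this, hb'l] at hi'2
            exact Bool.noConfusion hi'2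
          · have hj : j ≠ cc z l := fun h => hil (hcinj (show cc z i = cc z l from hi1.trans h))
            have hE' : ∃ i', cc z i' = j ∧ b' i' = true :=
              ⟨i, hi1, by rw [hb'ne i hil]; exact hi2⟩
            exact fun hiff => hj (hiff.2 hE')
  exact main _ b le_rfl

section Daisy

open Finset

variable {n : ℕ}

-- weight of a Bool vector
def wt {n : ℕ} (u : Fin n → Bool) : ℕ := (Finset.univ.filter fun j => u j = true).card

def supp {n : ℕ} (u : Fin n → Bool) : Finset (Fin n) := Finset.univ.filter fun j => u j = true

lemma wt_eq_card_supp (u : Fin n → Bool) : wt u = (supp u).card := rfl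

lemma mem_supp {u : Fin n → Bool} {j : Fin n} : j ∈ supp u ↔ u j = true := by
  unfold supp; simp

lemma hammingZeroLeft (v : Fin n → Bool) :
    hammingDist (fun _ => false) v = wt v := by
  rw [hamming_dffs, wt_eq_card_supp]
  congr 1
  ext j
  rw [mem_dffs, mem_supp]
  cases v j <;> simp

lemma wt_zero_iff {v : Fin n → Bool} : wt v = 0 ↔ v = fun _ => false := by
  constructor
  · intro h
    funext j
    cases hv : v j with
    | false => rfl
    | true =>
      exfalso
      have : j ∈ supp v := mem_supp.2 hv
      rw [wt_eq_card_supp] at h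
      exact absurd (Finset.card_pos.2 ⟨j, this⟩) (by omega)
  · rintro rfl
    rw [wt_eq_card_supp]
    convert Finset.card_empty
    ext j; simp [mem_supp]

lemma daisy_mem_of_le {X : Set (Fin n → Bool)} {u v : Fin n → Bool} (h : u ≤ v)
    (hv : v ∈ daisySet X) : u ∈ daisySet X := by
  obtain ⟨x, hx, hvx⟩ := hv
  exact ⟨x, hx, le_trans h hvx⟩

lemma bflip_le {v : Fin n → Bool} {i : Fin n} (h : v i = true) : bflip v i ≤ v := by
  intro j
  rcases eq_or_ne j i with rfl | hj
  · rw [bflip_apply_self, h]; exact Bool.le_true _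
  · rw [bflip_apply_ne _ hj]

lemma wt_bflip_of_true {v : Fin n → Bool} {i : Fin n} (h : v i = true) :
    wt (bflip v i) = wt v - 1 := by
  rw [wt_eq_card_supp, wt_eq_card_supp]
  have : supp (bflip v i) = (supp v).erase i := by
    ext j
    rcases eq_or_ne j i with rfl | hj
    · simp [mem_supp, bflip_apply_self, h]
    · simp [mem_supp, bflip_apply_ne _ hj, Finset.mem_erase, hj]
  rw [this, Finset.card_erase_of_mem (mem_supp.2 h)]

variable {X : Set (Fin n → Bool)}

lemma induced_adj {a b : ↥(daisySet X)} :
    ((Qcube n).induce (daisySet X)).Adj a b ↔ hammingDist a.val b.val = 1 := Iff.rfl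

lemma walk_length_lower {a b : ↥(daisySet X)}
    (w : ((Qcube n).induce (daisySet X)).Walk a b) :
    hammingDist a.val b.val ≤ w.length := by
  induction w with
  | nil => simp [hammingDist_self]
  | @cons u c b h p ih =>
    have h1 : hammingDist u.val c.val = 1 := induced_adj.1 h
    calc hammingDist u.val b.val ≤ hammingDist u.val c.val + hammingDist c.val b.val :=
          hammingDist_triangle _ _ _
      _ ≤ 1 + p.length := by omega
      _ = (SimpleGraph.Walk.cons h p).length := by rw [SimpleGraph.Walk.length_cons]; omega

lemma exists_walk_of_wt (h0 : (fun _ => false) ∈ daisySet X) :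
    ∀ (m : ℕ) (v : ↥(daisySet X)), wt v.val = m →
      ∃ w : ((Qcube n).induce (daisySet X)).Walk ⟨fun _ => false, h0⟩ v, w.length = m := by
  intro m
  induction m with
  | zero =>
    intro v hv
    have : v = ⟨fun _ => false, h0⟩ := Subtype.ext (wt_zero_iff.1 hv)
    subst this
    exact ⟨SimpleGraph.Walk.nil, rfl⟩
  | succ m ih =>
    intro v hv
    have : ∃ i, v.val i = true := by
      by_contra h
      push_neg at h
      have : wt v.val = 0 := wt_zero_iff.2 (funext fun j => by
        simpa using (Bool.not_eq_true _).mp (h j))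
      omega
    obtain ⟨i, hi⟩ := this
    set v' : Fin n → Bool := bflip v.val i with hv'
    have hv'D : v' ∈ daisySet X := daisy_mem_of_le (bflip_le hi) v.2
    have hwt' : wt v' = m := by rw [hv', wt_bflip_of_true hi]; omega
    obtain ⟨w', hw'⟩ := ih ⟨v', hv'D⟩ hwt'
    have hadj : ((Qcube n).induce (daisySet X)).Adj ⟨v', hv'D⟩ v := by
      rw [induced_adj]
      show hammingDist v' v.val = 1
      rw [hamming_dffs, dffs_comm, ← hamming_dffs, hv', hamming_bflip]
    exact ⟨w'.concat hadj, by rw [SimpleGraph.Walk.length_concat, hw']⟩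

lemma dist_eq_wt (h0 : (fun _ => false) ∈ daisySet X) (v : ↥(daisySet X)) :
    ((Qcube n).induce (daisySet X)).dist ⟨fun _ => false, h0⟩ v = wt v.val := by
  obtain ⟨w, hw⟩ := exists_walk_of_wt h0 (wt v.val) v rfl
  apply le_antisymm
  · calc ((Qcube n).induce (daisySet X)).dist ⟨fun _ => false, h0⟩ v ≤ w.length :=
        SimpleGraph.dist_le w
      _ = wt v.val := hw
  · obtain ⟨p, hp⟩ := SimpleGraph.Reachable.exists_walk_length_eq_dist ⟨w⟩
    calc wt v.val = hammingDist (fun _ => false) v.val := (hammingZeroLeft _).symm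
      _ ≤ p.length := walk_length_lower p
      _ = _ := hp

-- subcubes
def SC (X : Set (Fin n → Bool)) (t : Fin n → Bool) (K : Finset (Fin n)) : Set ↥(daisySet X) :=
  {v | ∀ j ∉ K, v.val j = t j}

lemma iso_of_SC {k : ℕ} {t : Fin n → Bool} (ht : t ∈ daisySet X) {K : Finset (Fin n)}
    (hK : K ⊆ supp t) (hk : K.card = k) :
    Nonempty ((((Qcube n).induce (daisySet X)).induce (SC X t K)) ≃g Qcube k) := by
  classical
  set eqv : {x // x ∈ K} ≃ Fin k := Finset.equivFinOfCardEq hk with heqv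
  -- inverse function construction
  have mkmem : ∀ b : Fin k → Bool,
      (fun j => if h : j ∈ K then b (eqv ⟨j, h⟩) else t j) ∈ daisySet X := by
    intro b
    apply daisy_mem_of_le _ ht
    intro j
    show (if h : j ∈ K then b (eqv ⟨j, h⟩) else t j) ≤ t j
    by_cases h : j ∈ K
    · rw [dif_pos h]
      have : t j = true := mem_supp.1 (hK h)
      rw [this]; exact Bool.le_true _
    · rw [dif_neg h]
  have mkmem2 : ∀ b : Fin k → Bool,
      (⟨(fun j => if h : j ∈ K then b (eqv ⟨j, h⟩) else t j), mkmem b⟩ : ↥(daisySet X)) ∈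
        SC X t K := by
    intro b j hj
    exact dif_neg hj
  refine ⟨⟨⟨fun v => fun i => v.val.val (eqv.symm i).val,
    fun b => ⟨⟨_, mkmem b⟩, mkmem2 b⟩, ?_, ?_⟩, ?_⟩⟩
  · -- left inverse
    intro v
    apply Subtype.ext; apply Subtype.ext
    funext j
    by_cases h : j ∈ K
    · show (if h' : j ∈ K then v.val.val (eqv.symm (eqv ⟨j, h'⟩)).val else t j) = v.val.val j
      rw [dif_pos h, Equiv.symm_apply_apply]
    · show (if h' : j ∈ K then _ else t j) = v.val.val j
      rw [dif_neg h, (v.2 j h).symm]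
  · -- right inverse
    intro b
    funext i
    show (if h : (eqv.symm i).val ∈ K then b (eqv ⟨(eqv.symm i).val, h⟩) else _) = b i
    rw [dif_pos (eqv.symm i).2]
    congr 1
    simp [Subtype.coe_eta]
  · -- map_rel_iff
    intro v w
    show hammingDist (fun i => v.val.val (eqv.symm i).val) (fun i => w.val.val (eqv.symm i).val)
        = 1 ↔ hammingDist v.val.val w.val.val = 1
    have hcard : hammingDist (fun i => v.val.val (eqv.symm i).val)
        (fun i => w.val.val (eqv.symm i).val) = hammingDist v.val.val w.val.val := by
      rw [hamming_dffs, hamming_dffs]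
      have hmemK : ∀ j ∈ dffs v.val.val w.val.val, j ∈ K := by
        intro j hj
        by_contra h
        rw [mem_dffs] at hj
        exact hj ((v.2 j h).trans (w.2 j h).symm)
      refine Finset.card_bij' (fun i _ => (eqv.symm i).val)
        (fun j hj => eqv ⟨j, hmemK j hj⟩) ?_ ?_ ?_ ?_
      · intro i hi
        rw [mem_dffs] at hi ⊢
        exact hi
      · intro j hj
        rw [mem_dffs]
        show v.val.val (eqv.symm (eqv ⟨j, _⟩)).val ≠ w.val.val (eqv.symm (eqv ⟨j, _⟩)).val
        rw [Equiv.symm_apply_apply]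
        exact mem_dffs.1 hj
      · intro i _
        simp [Subtype.coe_eta]
      · intro j hj
        simp
    rw [hcard]

end Daisy

section Daisy2
open Finset

variable {n : ℕ} {X : Set (Fin n → Bool)}

lemma bool_eq_of_ne_iff {x y z : Bool} (h : (x ≠ z) ↔ (y ≠ z)) : x = y := by
  cases x <;> cases y <;> cases z <;> simp_all

lemma SC_of_iso {k : ℕ} {S : Set ↥(daisySet X)}
    (φ : (((Qcube n).induce (daisySet X)).induce S) ≃g Qcube k) :
    ∃ t K, (t ∈ daisySet X ∧ K ⊆ supp t ∧ K.card = k) ∧ S = SC X t K := by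
  classical
  set ψ : (Fin k → Bool) → (Fin n → Bool) :=
    fun b => (((φ.symm b : ↥S) : ↥(daisySet X)) : Fin n → Bool) with hψ
  have hψD : ∀ b, ψ b ∈ daisySet X := fun b => ((φ.symm b : ↥S) : ↥(daisySet X)).2
  have hinj : Function.Injective ψ := by
    intro b b' h
    exact φ.symm.toEquiv.injective (Subtype.ext (Subtype.ext h))
  have hadj : ∀ b b', hammingDist (ψ b) (ψ b') = 1 ↔ hammingDist b b' = 1 := by
    intro b b'
    exact φ.symm.map_adj_iff (v := b) (w := b')
  have memS : ∀ v : ↥(daisySet X), v ∈ S ↔ ∃ b, ψ b = v.val := by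
    intro v
    constructor
    · intro hv
      refine ⟨φ ⟨v, hv⟩, ?_⟩
      show ((((φ.symm (φ ⟨v, hv⟩)) : ↥S) : ↥(daisySet X)) : Fin n → Bool) = v.val
      rw [RelIso.symm_apply_apply]
    · rintro ⟨b, hb⟩
      have : ((φ.symm b : ↥S) : ↥(daisySet X)) = v := Subtype.ext hb
      rw [← this]
      exact (φ.symm b).2
  obtain ⟨c, hcinj, hdesc⟩ := subcube_classify ψ hinj hadj
  set z0 : Fin k → Bool := fun _ => false with hz0
  set K : Finset (Fin n) := Finset.univ.image c with hk
  have hrange : ∀ u, (∃ b, ψ b = u) ↔ ∀ j ∉ K, u j = ψ z0 j := by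
    intro u
    constructor
    · rintro ⟨b, rfl⟩ j hj
      by_contra hne
      obtain ⟨i, hi1, _⟩ := (hdesc b j).1 hne
      exact hj (Finset.mem_image.2 ⟨i, Finset.mem_univ i, hi1⟩)
    · intro hu
      refine ⟨fun i => xor (u (c i)) (ψ z0 (c i)), funext fun j => ?_⟩
      by_cases hj : j ∈ K
      · obtain ⟨i, -, rfl⟩ := Finset.mem_image.1 hj
        apply bool_eq_of_ne_iff
        rw [hdesc (fun i => xor (u (c i)) (ψ z0 (c i))) (c i)]
        constructor
        · rintro ⟨i', hi', hb⟩
          have : i' = i := hcinj hi'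
          subst this
          cases hu1 : u (c i') <;> cases hu2 : ψ z0 (c i') <;> simp_all
        · intro hne
          refine ⟨i, rfl, ?_⟩
          cases hu1 : u (c i) <;> cases hu2 : ψ z0 (c i) <;> simp_all
      · have h1 : ¬(ψ (fun i => xor (u (c i)) (ψ z0 (c i))) j ≠ ψ z0 j) := by
          rw [hdesc]
          rintro ⟨i, hi1, -⟩
          exact hj (Finset.mem_image.2 ⟨i, Finset.mem_univ i, hi1⟩)
        rw [not_not.1 h1, hu j hj]
  set t : Fin n → Bool := fun j => if j ∈ K then true else ψ z0 j with ht
  have htoff : ∀ j ∉ K, t j = ψ z0 j := fun j hj => if_neg hj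
  have htD : t ∈ daisySet X := by
    obtain ⟨b, hb⟩ := (hrange t).2 htoff
    rw [← hb]; exact hψD b
  refine ⟨t, K, ⟨htD, ?_, ?_⟩, ?_⟩
  · intro j hj
    rw [mem_supp, ht]
    simp only [if_pos hj]
  · rw [hk, Finset.card_image_of_injective _ hcinj, Finset.card_univ, Fintype.card_fin]
  · ext v
    rw [memS v, hrange v.val]
    constructor
    · intro h j hj
      rw [htoff j hj]
      exact h j hj
    · intro h j hj
      rw [← htoff j hj]
      exact h j hj

lemma SC_injOn {k : ℕ} {t t' : Fin n → Bool} {K K' : Finset (Fin n)}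
    (ht : t ∈ daisySet X) (hKs : K ⊆ supp t) (hKc : K.card = k)
    (ht' : t' ∈ daisySet X) (hKs' : K' ⊆ supp t') (hKc' : K'.card = k)
    (h : SC X t K = SC X t' K') : t = t' ∧ K = K' := by
  have htm : ∀ (s s' : Fin n → Bool) (hs : s ∈ daisySet X) (Ks Ks' : Finset (Fin n)),
      Ks ⊆ supp s → SC X s Ks = SC X s' Ks' → (∀ j ∉ Ks', s j = s' j) ∧ Ks ⊆ Ks' := by
    intro s s' hs Ks Ks' hKsub heq
    have hsSC : (⟨s, hs⟩ : ↥(daisySet X)) ∈ SC X s Ks := fun j _ => rfl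
    have hs' : (⟨s, hs⟩ : ↥(daisySet X)) ∈ SC X s' Ks' := heq ▸ hsSC
    refine ⟨hs', ?_⟩
    intro j hj
    by_contra hj'
    have hsj : s j = true := mem_supp.1 (hKsub hj)
    have hbD : bflip s j ∈ daisySet X := daisy_mem_of_le (bflip_le hsj) hs
    have hbSC : (⟨bflip s j, hbD⟩ : ↥(daisySet X)) ∈ SC X s Ks := by
      intro j' hj''
      exact bflip_apply_ne _ (fun hh => hj'' (hh ▸ hj))
    have hb' : (⟨bflip s j, hbD⟩ : ↥(daisySet X)) ∈ SC X s' Ks' := heq ▸ hbSC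
    have h1 : bflip s j j = s' j := hb' j hj'
    have h2 : s j = s' j := hs' j hj'
    rw [bflip_apply_self, hsj] at h1
    rw [hsj] at h2
    rw [← h2] at h1
    exact Bool.noConfusion h1
  obtain ⟨hagree, hsub⟩ := htm t t' ht K K' hKs h
  obtain ⟨hagree', hsub'⟩ := htm t' t ht' K' K hKs' h.symm
  have hKK : K = K' := Finset.Subset.antisymm hsub hsub'
  refine ⟨funext fun j => ?_, hKK⟩
  by_cases hj : j ∈ K
  · rw [mem_supp.1 (hKs hj), mem_supp.1 (hKs' (hKK ▸ hj))]
  · exact hagree j (hKK ▸ hj)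

lemma cubeCount_eq (k : ℕ) :
    cubeCount ((Qcube n).induce (daisySet X)) k
      = ∑ t ∈ (Set.toFinite (daisySet X)).toFinset, (wt t).choose k := by
  classical
  unfold cubeCount
  set P : Set ((Fin n → Bool) × Finset (Fin n)) :=
    {p | p.1 ∈ daisySet X ∧ p.2 ⊆ supp p.1 ∧ p.2.card = k} with hP
  have hAP : {S : Set ↥(daisySet X) |
      Nonempty ((((Qcube n).induce (daisySet X)).induce S) ≃g Qcube k)}
        = (fun p : (Fin n → Bool) × Finset (Fin n) => SC X p.1 p.2) '' P := by
    ext S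
    constructor
    · rintro ⟨φ⟩
      obtain ⟨t, K, hcond, hS⟩ := SC_of_iso φ
      exact ⟨(t, K), hcond, hS.symm⟩
    · rintro ⟨⟨t, K⟩, ⟨h1, h2, h3⟩, rfl⟩
      exact iso_of_SC h1 h2 h3
  rw [hAP]
  rw [Set.ncard_image_of_injOn (by
    rintro ⟨t, K⟩ ⟨h1, h2, h3⟩ ⟨t', K'⟩ ⟨h1', h2', h3'⟩ heq
    obtain ⟨e1, e2⟩ := SC_injOn h1 h2 h3 h1' h2' h3' heq
    rw [Prod.mk.injEq]
    exact ⟨e1, e2⟩)]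
  set PF : Finset ((Fin n → Bool) × Finset (Fin n)) :=
    (Set.toFinite (daisySet X)).toFinset.biUnion
      (fun t => ((supp t).powersetCard k).image fun K => (t, K)) with hPF
  have hPeq : P = ↑PF := by
    ext ⟨t, K⟩
    rw [hP, hPF]
    simp only [Set.mem_setOf_eq, Finset.coe_biUnion, Set.mem_iUnion, Finset.mem_coe,
      Finset.mem_image, Finset.mem_powersetCard, Set.Finite.mem_toFinset, Prod.mk.injEq]
    constructor
    · rintro ⟨h1, h2, h3⟩
      exact ⟨t, h1, K, ⟨h2, h3⟩, rfl, rfl⟩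
    · rintro ⟨t', h1, K', ⟨h2, h3⟩, rfl, rfl⟩
      exact ⟨h1, h2, h3⟩
  rw [hPeq, Set.ncard_coe_finset, hPF]
  rw [Finset.card_biUnion (by
    intro t _ t' _ htt
    rw [Function.onFun, Finset.disjoint_left]
    rintro ⟨a, b⟩ ha hb
    obtain ⟨K1, -, e1⟩ := Finset.mem_image.1 ha
    obtain ⟨K2, -, e2⟩ := Finset.mem_image.1 hb
    exact htt ((congrArg Prod.fst e1).trans (congrArg Prod.fst e2).symm))]
  refine Finset.sum_congr rfl fun t _ => ?_
  rw [Finset.card_image_of_injective _ (fun K K' h => congrArg Prod.snd h),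
    Finset.card_powersetCard, ← wt_eq_card_supp]

lemma wCount_eq (h0 : (fun _ => false) ∈ daisySet X) (d : ℕ) :
    wCount ((Qcube n).induce (daisySet X)) ⟨fun _ => false, h0⟩ d
      = ((Set.toFinite (daisySet X)).toFinset.filter (fun t => wt t = d)).card := by
  classical
  unfold wCount
  have hset : {v : ↥(daisySet X) |
      ((Qcube n).induce (daisySet X)).dist ⟨fun _ => false, h0⟩ v = d}
        = {v : ↥(daisySet X) | wt v.val = d} := by
    ext v
    rw [Set.mem_setOf_eq, Set.mem_setOf_eq, dist_eq_wt h0 v]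
  rw [hset]
  rw [← Set.ncard_image_of_injective {v : ↥(daisySet X) | wt v.val = d} Subtype.val_injective]
  have himg : Subtype.val '' {v : ↥(daisySet X) | wt v.val = d}
      = ↑((Set.toFinite (daisySet X)).toFinset.filter (fun t => wt t = d)) := by
    ext u
    simp only [Set.mem_image, Set.mem_setOf_eq, Finset.coe_filter, Set.Finite.mem_toFinset]
    constructor
    · rintro ⟨⟨v, hv⟩, h1, rfl⟩
      exact ⟨hv, h1⟩
    · rintro ⟨h1, h2⟩
      exact ⟨⟨u, h1⟩, h2, rfl⟩
  rw [himg, Set.ncard_coe_finset]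

lemma binom_sum (m N : ℕ) (h : m < N) (x : ℝ) :
    ∑ k ∈ Finset.range N, (m.choose k : ℝ) * x ^ k = (x + 1) ^ m := by
  rw [add_pow]
  simp only [one_pow, mul_one]
  have hsub : Finset.range (m + 1) ⊆ Finset.range N := Finset.range_subset_range.2 (by omega)
  rw [← Finset.sum_subset hsub (fun k _ hk2 => by
    have hmk : m < k := by
      simp only [Finset.mem_range, not_lt] at hk2
      omega
    rw [Nat.choose_eq_zero_of_lt hmk]
    simp)]
  exact Finset.sum_congr rfl fun k _ => mul_comm _ _

end Daisy2

theorem cubePolynomial_of_daisy_cube_eq_W (n : ℕ)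
    (X : Set (Fin n → Bool)) (h0 : (fun _ => false) ∈ daisySet X) (x : ℝ) :
    ∑ k ∈ Finset.range (2 ^ n + 1),
      (cubeCount ((Qcube n).induce (daisySet X)) k : ℝ) * x ^ k =
    ∑ d ∈ Finset.range (2 ^ n + 1),
      (wCount ((Qcube n).induce (daisySet X)) ⟨fun _ => false, h0⟩ d : ℝ) * (x + 1) ^ d := by
  classical
  set N := 2 ^ n + 1 with hN
  set DF := (Set.toFinite (daisySet X)).toFinset with hDF
  have hwtlt : ∀ t : Fin n → Bool, wt t < N := by
    intro t
    have h1 : wt t ≤ n := by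
      rw [wt_eq_card_supp]
      calc (supp t).card ≤ (Finset.univ : Finset (Fin n)).card :=
            Finset.card_le_card (Finset.subset_univ _)
        _ = n := by rw [Finset.card_univ, Fintype.card_fin]
    have := Nat.lt_two_pow_self (n := n)
    omega
  have hL : ∑ k ∈ Finset.range N, (cubeCount ((Qcube n).induce (daisySet X)) k : ℝ) * x ^ k
      = ∑ t ∈ DF, (x + 1) ^ wt t := by
    calc ∑ k ∈ Finset.range N, (cubeCount ((Qcube n).induce (daisySet X)) k : ℝ) * x ^ k
        = ∑ k ∈ Finset.range N, ∑ t ∈ DF, ((wt t).choose k : ℝ) * x ^ k := by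
          refine Finset.sum_congr rfl fun k _ => ?_
          rw [cubeCount_eq k, Nat.cast_sum, Finset.sum_mul]
      _ = ∑ t ∈ DF, ∑ k ∈ Finset.range N, ((wt t).choose k : ℝ) * x ^ k := Finset.sum_comm
      _ = ∑ t ∈ DF, (x + 1) ^ wt t :=
          Finset.sum_congr rfl fun t _ => binom_sum _ _ (hwtlt t) x
  have hR : ∑ d ∈ Finset.range N,
      (wCount ((Qcube n).induce (daisySet X)) ⟨fun _ => false, h0⟩ d : ℝ) * (x + 1) ^ d
      = ∑ t ∈ DF, (x + 1) ^ wt t := by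
    have hmaps : ∀ t ∈ DF, wt t ∈ Finset.range N := fun t _ => Finset.mem_range.2 (hwtlt t)
    have hfib := Finset.sum_fiberwise_of_maps_to hmaps (fun t => (x + 1) ^ wt t)
    calc ∑ d ∈ Finset.range N,
          (wCount ((Qcube n).induce (daisySet X)) ⟨fun _ => false, h0⟩ d : ℝ) * (x + 1) ^ d
        = ∑ d ∈ Finset.range N, ∑ t ∈ DF.filter (fun t => wt t = d), (x + 1) ^ wt t := by
          refine Finset.sum_congr rfl fun d _ => ?_
          rw [wCount_eq h0 d]
          calc ((((Set.toFinite (daisySet X)).toFinset.filter (fun t => wt t = d)).card : ℝ))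
                * (x + 1) ^ d
              = ∑ _t ∈ DF.filter (fun t => wt t = d), (x + 1) ^ d := by
                rw [Finset.sum_const, nsmul_eq_mul, hDF]
            _ = ∑ t ∈ DF.filter (fun t => wt t = d), (x + 1) ^ wt t :=
                Finset.sum_congr rfl fun t ht => by rw [(Finset.mem_filter.1 ht).2]
      _ = ∑ t ∈ DF, (x + 1) ^ wt t := hfib
  rw [hL, hR]
end

section
/- The class of daisy cubes is closed under the Cartesian product: if X ⊆ {0,1}^n and Y ⊆ {0,1}^m, then the Cartesian product Q_n(X) □ Q_m(Y) is isomorphic to the daisy cube Q_{n+m}(Z), where Z = {xy : x ∈ X, y ∈ Y} is the set of concatenations of a word of X with a word of Y. -/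
lemma hammingDist_append {n m : ℕ} (x x' : Fin n → Bool) (y y' : Fin m → Bool) :
    hammingDist (Fin.append x y) (Fin.append x' y') = hammingDist x x' + hammingDist y y' := by
  classical
  simp only [hammingDist, Finset.card_filter]
  rw [Fin.sum_univ_add]
  simp [Fin.append_left, Fin.append_right]

lemma append_decomp {n m : ℕ} (z : Fin (n + m) → Bool) :
    z = Fin.append (fun i => z (Fin.castAdd m i)) (fun j => z (Fin.natAdd n j)) := by
  funext i
  refine Fin.addCases (fun i => ?_) (fun j => ?_) i
  · rw [Fin.append_left]
  · rw [Fin.append_right]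

theorem daisy_cubes_closed_under_boxProd (n m : ℕ)
    (X : Set (Fin n → Bool)) (Y : Set (Fin m → Bool)) :
    Nonempty
      ((((Qcube n).induce (daisySet X)).boxProd ((Qcube m).induce (daisySet Y))) ≃g
        (Qcube (n + m)).induce
          (daisySet {z : Fin (n + m) → Bool | ∃ x ∈ X, ∃ y ∈ Y, z = Fin.append x y})) := by
  set Z := {z : Fin (n + m) → Bool | ∃ x ∈ X, ∃ y ∈ Y, z = Fin.append x y}
  have hmem : ∀ u v, u ∈ daisySet X → v ∈ daisySet Y → Fin.append u v ∈ daisySet Z := by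
    rintro u v ⟨x, hx, hux⟩ ⟨y, hy, hvy⟩
    refine ⟨Fin.append x y, ⟨x, hx, y, hy, rfl⟩, fun i => ?_⟩
    refine Fin.addCases (fun i => ?_) (fun j => ?_) i
    · rw [Fin.append_left, Fin.append_left]; exact hux i
    · rw [Fin.append_right, Fin.append_right]; exact hvy j
  have hmem1 : ∀ z ∈ daisySet Z, (fun i => z (Fin.castAdd m i)) ∈ daisySet X := by
    rintro z ⟨w, ⟨x, hx, y, hy, rfl⟩, hz⟩
    refine ⟨x, hx, fun i => ?_⟩
    have := hz (Fin.castAdd m i)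
    rwa [Fin.append_left] at this
  have hmem2 : ∀ z ∈ daisySet Z, (fun j => z (Fin.natAdd n j)) ∈ daisySet Y := by
    rintro z ⟨w, ⟨x, hx, y, hy, rfl⟩, hz⟩
    refine ⟨y, hy, fun j => ?_⟩
    have := hz (Fin.natAdd n j)
    rwa [Fin.append_right] at this
  refine ⟨⟨⟨fun p => ⟨Fin.append p.1.1 p.2.1, hmem _ _ p.1.2 p.2.2⟩,
    fun z => (⟨fun i => z.1 (Fin.castAdd m i), hmem1 _ z.2⟩,
              ⟨fun j => z.1 (Fin.natAdd n j), hmem2 _ z.2⟩), ?_, ?_⟩, ?_⟩⟩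
  · rintro ⟨⟨u, hu⟩, ⟨v, hv⟩⟩
    simp only [Prod.mk.injEq, Subtype.mk.injEq]
    constructor <;> funext i <;> simp [Fin.append_left, Fin.append_right]
  · rintro ⟨z, hz⟩
    simp only [Subtype.mk.injEq]
    exact (append_decomp z).symm
  · rintro ⟨⟨u, hu⟩, ⟨v, hv⟩⟩ ⟨⟨u', hu'⟩, ⟨v', hv'⟩⟩
    show hammingDist (Fin.append u v) (Fin.append u' v') = 1 ↔
      (hammingDist u u' = 1 ∧ (⟨v, hv⟩ : daisySet Y) = ⟨v', hv'⟩) ∨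
      (hammingDist v v' = 1 ∧ (⟨u, hu⟩ : daisySet X) = ⟨u', hu'⟩)
    rw [hammingDist_append]
    simp only [Subtype.mk.injEq]
    constructor
    · intro h
      rcases Nat.eq_zero_or_pos (hammingDist u u') with h1 | h1
      · exact Or.inr ⟨by omega, hammingDist_eq_zero.mp h1⟩
      · have h2 : hammingDist v v' = 0 := by omega
        exact Or.inl ⟨by omega, hammingDist_eq_zero.mp h2⟩
    · rintro (⟨h1, h2⟩ | ⟨h1, h2⟩)
      · rw [h2, hammingDist_self]; omega
      · rw [h2, hammingDist_self]; omega
end
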